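/- arXiv:2010.09876 — 7 statements merged into one kernel-verified Lean document; each statement's English description precedes it below -/
import Mathlib

section
/- Uniform perfection is a quasisymmetric invariant: if f: Z → Z' is an η-quasisymmetric homeomorphism between metric spaces and Z is uniformly perfect, then Z' is uniformly perfect. -/
open Metric Set

/-- `f` is an η-quasisymmetry. -/
def IsQS {X Y : Type*} [MetricSpace X] [MetricSpace Y] (η : ℝ → ℝ) (f : X → Y) : Prop :=
  ∀ t : ℝ, 0 ≤ t → ∀ x a b : X,
    dist x a ≤ t * dist x b → dist (f x) (f a) ≤ η t * dist (f x) (f b)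

/-- A metric space is uniformly perfect if there is `μ ∈ (0,1)` such that every closed
ball `B_r(x) ≠ Z` with `r > 0` contains a point outside `B_{μr}(x)`. -/
def UniformlyPerfect (Z : Type*) [MetricSpace Z] : Prop :=
  ∃ μ : ℝ, 0 < μ ∧ μ < 1 ∧ ∀ (x : Z) (r : ℝ), 0 < r → closedBall x r ≠ univ →
    (closedBall x r \ closedBall x (μ * r)).Nonempty

/-- Uniform perfection is invariant under η-quasisymmetric homeomorphisms,
where `η` is a homeomorphism of `[0,∞)`. -/
theorem stmt_7 {Z Z' : Type*} [MetricSpace Z] [MetricSpace Z']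
    (η : ℝ → ℝ) (hmono : StrictMonoOn η (Ici 0)) (hpos : ∀ t, 0 ≤ t → 0 ≤ η t)
    (hsurj : ∀ s, 0 ≤ s → ∃ t, 0 ≤ t ∧ η t = s)
    (f : Z ≃ₜ Z') (hf : IsQS η f) (h : UniformlyPerfect Z) :
    UniformlyPerfect Z' := by
  classical
  obtain ⟨μ, hμ0, hμ1, hUP⟩ := h
  -- η 0 = 0
  have hη0 : η 0 = 0 := by
    obtain ⟨t, ht0, htη⟩ := hsurj 0 le_rfl
    rcases ht0.eq_or_lt with h0 | h0
    · rw [← h0] at htη; exact htη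
    · exfalso
      have h1 : η 0 < η t := hmono (mem_Ici.2 le_rfl) (mem_Ici.2 ht0) h0
      have h2 := hpos 0 le_rfl
      rw [htη] at h1; linarith
  have hμinv : (1:ℝ) < μ⁻¹ * μ⁻¹ := by
    have h1 : (1:ℝ) < μ⁻¹ := (one_lt_inv₀ hμ0).2 hμ1
    nlinarith
  set C := η (μ⁻¹ * μ⁻¹) with hCdef
  have hC0 : 0 < C := by
    rw [hCdef, ← hη0]
    exact hmono (mem_Ici.2 le_rfl) (mem_Ici.2 (by linarith)) (by linarith)
  refine ⟨1/(C+1), by positivity, ?_, ?_⟩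
  · rw [div_lt_one (by linarith)]; linarith
  intro x' r hr hball
  obtain ⟨z', hz'⟩ := (ne_univ_iff_exists_notMem _).1 hball
  have hz'r : r < dist x' z' := by
    rw [mem_closedBall, not_le, dist_comm] at hz'; exact hz'
  have hd0 : 0 < dist x' z' := lt_trans hr hz'r
  set x := f.symm x' with hx
  set z := f.symm z' with hz
  have hfx : f x = x' := f.apply_symm_apply x'
  have hfz : f z = z' := f.apply_symm_apply z'
  have hne : x' ≠ z' := by
    intro e; rw [e, dist_self] at hd0; exact lt_irrefl _ hd0
  have hR : 0 < dist x z := dist_pos.2 (fun e => hne (by rw [← hfx, ← hfz, e]))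
  -- balls of radius < dist x z are proper
  have hball' : ∀ s : ℝ, s < dist x z → closedBall x s ≠ univ := by
    intro s hs hcon
    have hmem : z ∈ closedBall x s := hcon ▸ mem_univ z
    rw [mem_closedBall, dist_comm] at hmem
    linarith
  have hw' : ∀ k : ℕ, (closedBall x (μ^(k+1) * dist x z) \
      closedBall x (μ * (μ^(k+1) * dist x z))).Nonempty := by
    intro k
    apply hUP
    · positivity
    · apply hball'
      have h1 : μ^(k+1) < 1 := pow_lt_one₀ hμ0.le hμ1 (Nat.succ_ne_zero k)
      nlinarith
  choose w hw using hw'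
  set y : ℕ → Z := fun k => Nat.rec z (fun n _ => w n) k with hy
  have hy0 : y 0 = z := rfl
  have hys : ∀ n, y (n+1) = w n := fun n => rfl
  -- upper bound
  have hub : ∀ k, dist x (y k) ≤ μ^k * dist x z := by
    intro k
    cases k with
    | zero => simp [hy0]
    | succ n =>
      have := (hw n).1
      rw [mem_closedBall, dist_comm] at this
      rw [hys]; exact this
  -- lower bound
  have hlb : ∀ k, μ^(k+1) * dist x z < dist x (y k) := by
    intro k
    cases k with
    | zero =>
      rw [hy0]; rw [pow_one]; nlinarith
    | succ n =>
      have := (hw n).2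
      rw [mem_closedBall, not_le, dist_comm (w n) x] at this
      rw [hys]
      calc μ^(n+1+1) * dist x z = μ * (μ^(n+1) * dist x z) := by ring
        _ < dist x (w n) := this
  -- chain bound
  have hchain : ∀ k, dist x' (f (y k)) ≤ C * dist x' (f (y (k+1))) := by
    intro k
    have h1 : dist x (y k) ≤ (μ⁻¹ * μ⁻¹) * dist x (y (k+1)) := by
      have e : μ^k * dist x z = (μ⁻¹ * μ⁻¹) * (μ^(k+1+1) * dist x z) := by
        field_simp
        ring
      calc dist x (y k) ≤ μ^k * dist x z := hub k
        _ = (μ⁻¹ * μ⁻¹) * (μ^(k+1+1) * dist x z) := e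
        _ ≤ (μ⁻¹ * μ⁻¹) * dist x (y (k+1)) := by
            apply mul_le_mul_of_nonneg_left (hlb (k+1)).le (by positivity)
    have := hf (μ⁻¹ * μ⁻¹) (by positivity) x (y k) (y (k+1)) h1
    rwa [hfx] at this
  -- decay bound
  have hdecay : ∀ k, dist x' (f (y k)) ≤ η (μ^k) * dist x' z' := by
    intro k
    have := hf (μ^k) (by positivity) x (y k) z (hub k)
    rwa [hfx, hfz] at this
  -- find k with dist ≤ r
  obtain ⟨t0, ht0, hηt0⟩ := hsurj (r / dist x' z') (by positivity)
  have ht0pos : 0 < t0 := by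
    rcases ht0.eq_or_lt with h0 | h0
    · exfalso
      rw [← h0, hη0] at hηt0
      have : 0 < r / dist x' z' := div_pos hr hd0
      linarith
    · exact h0
  obtain ⟨n, hn⟩ := exists_pow_lt_of_lt_one ht0pos hμ1
  have hex : ∃ k, dist x' (f (y k)) ≤ r := by
    refine ⟨n, ?_⟩
    have h2 : η (μ^n) < η t0 :=
      hmono (mem_Ici.2 (by positivity)) (mem_Ici.2 ht0) hn
    calc dist x' (f (y n)) ≤ η (μ^n) * dist x' z' := hdecay n
      _ ≤ η t0 * dist x' z' := mul_le_mul_of_nonneg_right h2.le hd0.le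
      _ = r := by rw [hηt0, div_mul_cancel₀ _ hd0.ne']
  set k := Nat.find hex with hkdef
  have hk : dist x' (f (y k)) ≤ r := Nat.find_spec hex
  have hkpos : k ≠ 0 := by
    intro e
    rw [e, hy0, hfz] at hk
    linarith
  obtain ⟨m, hm⟩ : ∃ m, k = m + 1 := ⟨k - 1, by omega⟩
  have hmlt : m < k := by omega
  have hmin : r < dist x' (f (y m)) := lt_of_not_ge (Nat.find_min hex hmlt)
  have hc := hchain m
  rw [← hm] at hc
  have hdk : 0 < dist x' (f (y k)) := by nlinarith
  have hlow : 1/(C+1) * r < dist x' (f (y k)) := by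
    rw [div_mul_eq_mul_div, one_mul, div_lt_iff₀ (by linarith : (0:ℝ) < C+1)]
    nlinarith
  refine ⟨f (y k), ?_, ?_⟩
  · rw [mem_closedBall, dist_comm]; exact hk
  · rw [mem_closedBall, not_le, dist_comm]; exact hlow
end

section
/- Every quasi-isometry f: [0,∞) → [0,∞) is within finite sup-distance of a bilipschitz homeomorphism of [0,∞); moreover this sup-distance can be bounded in terms of the quasi-isometry constants of f only. -/
set_option maxHeartbeats 1000000

/-- The increasing sequence used to build the bilipschitz approximation: running
maximum of `f` on the grid `n*s`, forced to increase by at least 1 at each step. -/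
def bseq (f : ℝ → ℝ) (s : ℝ) : ℕ → ℝ
  | 0 => 0
  | n + 1 => max (bseq f s n + 1) (f ((n + 1) * s))

theorem qi_dec_bound (lam eps : ℝ) (hlam : 1 ≤ lam) (heps : 0 ≤ eps) (f : ℝ → ℝ)
    (hpos : ∀ x, 0 ≤ x → 0 ≤ f x)
    (hQI : ∀ x y, 0 ≤ x → 0 ≤ y →
      lam⁻¹ * |x - y| - eps ≤ |f x - f y| ∧ |f x - f y| ≤ lam * |x - y| + eps) :
    ∀ x y, 0 ≤ x → x ≤ y → f x - f y ≤ lam ^ 2 * (2 * eps + 1) + eps := by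
  intro x y hx hxy
  have hlam0 : (0:ℝ) < lam := lt_of_lt_of_le one_pos hlam
  have hy : 0 ≤ y := hx.trans hxy
  by_cases hfy : f x ≤ f y
  · nlinarith [sq_nonneg lam]
  push_neg at hfy
  -- escape point w with f w large
  set w : ℝ := y + lam * (f x + 2 * eps + 1) with hw_def
  have hfx0 : 0 ≤ f x := hpos x hx
  have hw : y ≤ w := by nlinarith
  have hw0 : 0 ≤ w := hy.trans hw
  have hxw : x ≤ w := hxy.trans hw
  have hfw : f x + eps + 1 ≤ f w := by
    have h1 := (hQI x w hx hw0).1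
    have habs : |x - w| = w - x := by rw [abs_sub_comm]; exact abs_of_nonneg (by linarith)
    rw [habs] at h1
    have h2 : f x + eps + 1 ≤ lam⁻¹ * (w - x) - eps := by
      have : lam * (f x + 2*eps + 1) ≤ w - x := by nlinarith
      have := (mul_le_mul_of_nonneg_left this (le_of_lt (inv_pos.mpr hlam0)))
      rw [inv_mul_cancel_left₀ (ne_of_gt hlam0)] at this
      linarith
    have h3 : f x + eps + 1 ≤ |f x - f w| := le_trans h2 h1
    have hfw0 : 0 ≤ f w := hpos w hw0
    rcases abs_cases (f x - f w) with ⟨he, _⟩ | ⟨he, _⟩ <;> [skip; linarith]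
    · exfalso; linarith
  -- approximate IVT on [y, w] at level t = f x
  set t : ℝ := f x with ht_def
  set S : Set ℝ := {u | u ∈ Set.Icc y w ∧ f u ≤ t} with hS_def
  have hySmem : y ∈ S := ⟨⟨le_refl y, hw⟩, le_of_lt hfy⟩
  have hSne : S.Nonempty := ⟨y, hySmem⟩
  have hSbdd : BddAbove S := ⟨w, fun u hu => hu.1.2⟩
  set u₀ : ℝ := sSup S with hu0_def
  have hu0y : y ≤ u₀ := le_csSup hSbdd hySmem
  have hu0w : u₀ ≤ w := csSup_le hSne (fun u hu => hu.1.2)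
  set δ : ℝ := 1 / (2 * lam) with hδ_def
  have hδ0 : 0 < δ := by positivity
  obtain ⟨u₁, hu₁S, hu₁gt⟩ := exists_lt_of_lt_csSup hSne (show u₀ - δ < u₀ by linarith)
  have hu₁le : u₁ ≤ u₀ := le_csSup hSbdd hu₁S
  -- choose u₂ just above u₀ with f u₂ > t
  have hu2 : ∃ u₂, u₀ ≤ u₂ ∧ u₂ ≤ u₀ + δ ∧ y ≤ u₂ ∧ u₂ ≤ w ∧ t < f u₂ := by
    by_cases hc : w ≤ u₀ + δ
    · refine ⟨w, hu0w, hc, hw, le_refl w, by linarith⟩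
    · push_neg at hc
      refine ⟨u₀ + δ, by linarith, le_refl _, by linarith, le_of_lt hc, ?_⟩
      by_contra hcon
      push_neg at hcon
      have : u₀ + δ ∈ S := ⟨⟨by linarith, le_of_lt hc⟩, hcon⟩
      have := le_csSup hSbdd this
      linarith
  obtain ⟨u₂, h21, h22, h2y, h2w, h2f⟩ := hu2
  have hu₁y : y ≤ u₁ := hu₁S.1.1
  have hu₁0 : 0 ≤ u₁ := hy.trans hu₁y
  have hu₂0 : 0 ≤ u₂ := hy.trans h2y
  have hdist : |u₁ - u₂| ≤ 2 * δ := by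
    rw [abs_sub_comm, abs_of_nonneg (by linarith)]; linarith
  have hfu₁ : t - (1 + eps) ≤ f u₁ := by
    have h4 := (hQI u₁ u₂ hu₁0 hu₂0).2
    have h5 : |f u₁ - f u₂| ≤ lam * (2 * δ) + eps :=
      le_trans h4 (by nlinarith [abs_nonneg (u₁ - u₂)])
    have h6 : lam * (2 * δ) = 1 := by
      rw [hδ_def]; field_simp
    rw [h6] at h5
    have := abs_le.mp h5
    linarith
  have hfu₁' : f u₁ ≤ t := hu₁S.2
  -- now u₁ is far from x in the domain but close in the image
  have h7 := (hQI x u₁ hx hu₁0).1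
  have h8 : |f x - f u₁| ≤ 1 + eps := by
    rw [abs_le]; constructor <;> [linarith; linarith]
  have h9 : |x - u₁| = u₁ - x := by
    rw [abs_sub_comm]; exact abs_of_nonneg (by linarith)
  rw [h9] at h7
  have h10 : u₁ - x ≤ lam * (1 + 2 * eps) := by
    have := le_trans h7 h8
    have h11 : lam⁻¹ * (u₁ - x) ≤ 1 + 2 * eps := by linarith
    have := mul_le_mul_of_nonneg_left h11 (le_of_lt hlam0)
    rw [mul_inv_cancel_left₀ (ne_of_gt hlam0)] at this
    linarith
  have h12 : y - x ≤ lam * (1 + 2 * eps) := by linarith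
  have h13 := (hQI x y hx hy).2
  have h14 : |x - y| = y - x := by rw [abs_sub_comm]; exact abs_of_nonneg (by linarith)
  rw [h14] at h13
  have h15 : f x - f y ≤ lam * (y - x) + eps := le_trans (le_abs_self _) h13
  nlinarith


/-- Every (λ,ε)-quasi-isometry of `[0,∞)` is within sup-distance `M` of a bilipschitz
homeomorphism of `[0,∞)`, where `M` depends only on `λ` and `ε`. -/
theorem stmt_10 :
    ∀ lam eps : ℝ, 1 ≤ lam → 0 ≤ eps → ∃ M : ℝ,
      ∀ f : ℝ → ℝ,
        (∀ x, 0 ≤ x → 0 ≤ f x) →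
        (∀ x y, 0 ≤ x → 0 ≤ y →
          lam⁻¹ * |x - y| - eps ≤ |f x - f y| ∧ |f x - f y| ≤ lam * |x - y| + eps) →
        (∀ z, 0 ≤ z → ∃ x, 0 ≤ x ∧ |f x - z| ≤ eps) →
        ∃ g : ℝ → ℝ,
          (∃ L : ℝ, 1 ≤ L ∧
            (∀ x y, 0 ≤ x → 0 ≤ y →
              L⁻¹ * |x - y| ≤ |g x - g y| ∧ |g x - g y| ≤ L * |x - y|) ∧
            (∀ x, 0 ≤ x → 0 ≤ g x) ∧ (∀ z, 0 ≤ z → ∃ x, 0 ≤ x ∧ g x = z)) ∧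
          ∀ x, 0 ≤ x → |f x - g x| ≤ M := by
  intro lam eps hlam heps
  have hlam0 : (0:ℝ) < lam := lt_of_lt_of_le one_pos hlam
  set C : ℝ := lam ^ 2 * (2 * eps + 1) + eps with hC_def
  have hC0 : 0 ≤ C := by nlinarith [sq_nonneg lam]
  set s : ℝ := lam * (1 + eps) with hs_def
  have hs1 : 1 ≤ s := by nlinarith
  have hs0 : 0 < s := lt_of_lt_of_le one_pos hs1
  have hinv : lam⁻¹ * s = 1 + eps := by
    rw [hs_def, inv_mul_cancel_left₀ (ne_of_gt hlam0)]
  set β : ℝ := lam * s + eps + eps + C with hβ_def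
  have hβ1 : 1 ≤ β := by nlinarith
  have hβ0 : 0 ≤ β := le_trans zero_le_one hβ1
  refine ⟨(lam * s + eps) + (2 * C + eps) + β, ?_⟩
  intro f hpos hQI hsurj
  have hdec := qi_dec_bound lam eps hlam heps f hpos hQI
  -- f 0 is small
  have hf0 : f 0 ≤ eps + C := by
    obtain ⟨x₀, hx₀, hfx₀⟩ := hsurj 0 (le_refl 0)
    have h1 : f x₀ ≤ eps := by
      have := abs_le.mp (by simpa using hfx₀)
      linarith [this.2]
    have h2 := hdec 0 x₀ (le_refl 0) hx₀
    linarith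
  set b : ℕ → ℝ := bseq f s with hb_def
  have hb0 : b 0 = 0 := rfl
  have hbsucc : ∀ n : ℕ, b (n + 1) = max (b n + 1) (f ((n + 1) * s)) := fun n => rfl
  have hbstep_lo : ∀ n : ℕ, b n + 1 ≤ b (n + 1) := fun n => by
    rw [hbsucc]; exact le_max_left _ _
  have hbn : ∀ n : ℕ, (n : ℝ) ≤ b n := by
    intro n; induction n with
    | zero => simp [hb0]
    | succ k ih => have := hbstep_lo k; push_cast; linarith
  have hbgef : ∀ n : ℕ, 1 ≤ n → f (n * s) ≤ b n := by
    intro n hn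
    cases n with
    | zero => omega
    | succ m =>
      rw [hbsucc]
      refine le_trans ?_ (le_max_right _ _)
      push_cast
      exact le_refl _
  -- lower grid separation
  have hgrid_lo : ∀ k n : ℕ, k < n → ((n : ℝ) - k) ≤ |f (n * s) - f (k * s)| := by
    intro k n hkn
    have hk0 : (0:ℝ) ≤ (k:ℝ) * s := by positivity
    have hn0 : (0:ℝ) ≤ (n:ℝ) * s := by positivity
    have h1 := (hQI (n * s) (k * s) hn0 hk0).1
    have hd1 : (1:ℝ) ≤ (n:ℝ) - k := by
      have : (k:ℝ) + 1 ≤ n := by exact_mod_cast hkn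
      linarith
    have habs : |(n:ℝ) * s - k * s| = ((n:ℝ) - k) * s := by
      rw [abs_of_nonneg] <;> nlinarith
    rw [habs] at h1
    have h2 : lam⁻¹ * (((n:ℝ) - k) * s) = ((n:ℝ) - k) * (1 + eps) := by
      rw [show lam⁻¹ * (((n:ℝ) - k) * s) = ((n:ℝ) - k) * (lam⁻¹ * s) by ring, hinv]
    rw [h2] at h1
    nlinarith
  -- representation of b n
  have hrep : ∀ n : ℕ, b n = n ∨ ∃ k : ℕ, 1 ≤ k ∧ k ≤ n ∧ b n = f (k * s) + ((n : ℝ) - k) := by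
    intro n; induction n with
    | zero => left; simp [hb0]
    | succ m ih =>
      rw [hbsucc]
      rcases max_cases (b m + 1) (f ((m + 1) * s)) with ⟨heq, _⟩ | ⟨heq, _⟩
      · rw [heq]
        rcases ih with h | ⟨k, hk1, hk2, hk3⟩
        · left; rw [h]; push_cast; ring
        · right; exact ⟨k, hk1, hk2.trans (Nat.le_succ m), by rw [hk3]; push_cast; ring⟩
      · right; exact ⟨m + 1, Nat.le_add_left 1 m, le_refl _, by rw [heq]; push_cast; ring⟩
  -- b n is close to f (n*s) from above
  have hbub : ∀ n : ℕ, b n ≤ f (n * s) + 2 * C := by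
    intro n
    have hn0 : (0:ℝ) ≤ (n:ℝ) * s := by positivity
    have hfn0 : 0 ≤ f (n * s) := hpos _ hn0
    rcases hrep n with h | ⟨k, hk1, hk2, hk3⟩
    · -- b n = n ; show n ≤ f (n*s) + 2C
      rw [h]
      rcases Nat.eq_zero_or_pos n with rfl | hn
      · simp only [Nat.cast_zero, zero_mul]
        linarith [hpos 0 (le_refl 0)]
      · have h1 := hgrid_lo 0 n hn
        simp only [Nat.cast_zero, zero_mul, sub_zero] at h1
        have hf00 : 0 ≤ f 0 := hpos 0 (le_refl 0)
        rcases abs_cases (f (n * s) - f 0) with ⟨he, _⟩ | ⟨he, _⟩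
        · linarith
        · have h2 := hdec 0 (n * s) (le_refl 0) hn0
          linarith
    · rw [hk3]
      rcases eq_or_lt_of_le hk2 with rfl | hkn
      · have he0 : (k:ℝ) - (k:ℝ) = 0 := sub_self _
        rw [he0]; linarith
      · have h1 := hgrid_lo k n hkn
        have hk0 : (0:ℝ) ≤ (k:ℝ) * s := by positivity
        rcases abs_cases (f (n * s) - f (k * s)) with ⟨he, _⟩ | ⟨he, _⟩
        · linarith
        · have h2 : f (k * s) - f (n * s) ≤ C := by
            apply hdec _ _ hk0
            have : (k:ℝ) ≤ n := by exact_mod_cast le_of_lt hkn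
            nlinarith
          linarith
  have hbclose : ∀ n : ℕ, |b n - f (n * s)| ≤ 2 * C + eps := by
    intro n
    rcases Nat.eq_zero_or_pos n with rfl | hn
    · rw [hb0]; simp only [Nat.cast_zero, zero_mul, zero_sub, abs_neg]
      rw [abs_of_nonneg (hpos 0 (le_refl 0))]
      linarith
    · rw [abs_le]; constructor
      · linarith [hbgef n hn]
      · linarith [hbub n]
  have hbstep_hi : ∀ n : ℕ, b (n + 1) ≤ b n + β := by
    intro n
    rw [hbsucc, max_le_iff]
    constructor
    · linarith
    · have hn0 : (0:ℝ) ≤ (n:ℝ) * s := mul_nonneg (Nat.cast_nonneg n) (le_of_lt hs0)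
      have hn10 : (0:ℝ) ≤ ((n:ℝ)+1) * s :=
        mul_nonneg (by positivity) (le_of_lt hs0)
      have h1 := (hQI (((n:ℝ) + 1) * s) ((n:ℝ) * s) hn10 hn0).2
      have habs : |((n:ℝ) + 1) * s - (n:ℝ) * s| = s := by
        rw [show ((n:ℝ) + 1) * s - (n:ℝ) * s = s by ring, abs_of_pos hs0]
      have h2 : f (((n:ℝ)+1) * s) ≤ f ((n:ℝ) * s) + (lam * s + eps) := by
        rw [habs] at h1
        have := le_trans (le_abs_self _) h1
        linarith
      have h3 : f (n * s) ≤ b n + (eps + C) := by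
        rcases Nat.eq_zero_or_pos n with rfl | hn
        · simp only [Nat.cast_zero, zero_mul, hb0]
          linarith
        · linarith [hbgef n hn, hbclose n]
      push_cast at h2 ⊢
      linarith
  -- the piecewise linear interpolation of b
  set g : ℝ → ℝ := fun x => b (⌊x / s⌋.toNat) +
      (x - (⌊x / s⌋.toNat : ℝ) * s) * (b (⌊x / s⌋.toNat + 1) - b (⌊x / s⌋.toNat)) / s
    with hg_def
  have hstep : ∀ n : ℕ, 1 ≤ b (n+1) - b n ∧ b (n+1) - b n ≤ β := fun n =>
    ⟨by linarith [hbstep_lo n], by linarith [hbstep_hi n]⟩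
  have hfloor : ∀ (n : ℕ) (x : ℝ), (n:ℝ) * s ≤ x → x < ((n:ℝ)+1) * s → (⌊x / s⌋).toNat = n := by
    intro n x h1 h2
    have hfl : ⌊x / s⌋ = (n:ℤ) := by
      rw [Int.floor_eq_iff]
      constructor
      · push_cast
        rw [le_div_iff₀ hs0]
        exact h1
      · push_cast
        rw [div_lt_iff₀ hs0]
        exact h2
    rw [hfl]
    exact Int.toNat_natCast n
  have hfloor_bounds : ∀ x : ℝ, 0 ≤ x →
      ((⌊x / s⌋.toNat : ℝ) * s ≤ x ∧ x < ((⌊x / s⌋.toNat : ℝ) + 1) * s) := by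
    intro x hx
    have h0 : (0:ℤ) ≤ ⌊x / s⌋ := Int.floor_nonneg.mpr (div_nonneg hx hs0.le)
    have hcast : ((⌊x / s⌋.toNat : ℕ) : ℝ) = ((⌊x / s⌋ : ℤ) : ℝ) := by
      exact_mod_cast congrArg (fun z : ℤ => (z : ℝ)) (Int.toNat_of_nonneg h0)
    constructor
    · rw [hcast]
      calc ((⌊x / s⌋ : ℤ) : ℝ) * s ≤ (x / s) * s :=
            mul_le_mul_of_nonneg_right (Int.floor_le _) hs0.le
        _ = x := by field_simp
    · rw [hcast]
      have := Int.lt_floor_add_one (x / s)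
      calc x = (x / s) * s := by field_simp
        _ < (((⌊x / s⌋ : ℤ) : ℝ) + 1) * s := by
            apply mul_lt_mul_of_pos_right this hs0
  have hgA : ∀ (n : ℕ) (x : ℝ), (n:ℝ) * s ≤ x → x ≤ ((n:ℝ)+1) * s →
      g x = b n + (x - (n:ℝ) * s) * (b (n+1) - b n) / s := by
    intro n x h1 h2
    rcases lt_or_eq_of_le h2 with h2' | h2'
    · rw [hg_def]
      simp only [hfloor n x h1 h2']
    · subst h2'
      have hub : ((n:ℝ)+1) * s < ((((n+1):ℕ):ℝ) + 1) * s := by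
        push_cast
        nlinarith [hs0]
      have hlb : (((n+1):ℕ):ℝ) * s ≤ ((n:ℝ)+1) * s := by push_cast; exact le_refl _
      rw [hg_def]
      simp only [hfloor (n+1) (((n:ℝ)+1) * s) hlb hub]
      push_cast
      have h3 : ((n:ℝ) + 1) * s - ((n:ℝ) + 1) * s = 0 := by ring
      field_simp
      ring
  have hgrid_eval : ∀ n : ℕ, g ((n:ℝ) * s) = b n := by
    intro n
    rw [hgA n _ (le_refl _) (by nlinarith [hs0, Nat.cast_nonneg (α := ℝ) n])]
    simp
  have hgB : ∀ (n : ℕ) (x y : ℝ), (n:ℝ) * s ≤ x → x ≤ y → y ≤ ((n:ℝ)+1) * s →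
      (y - x) / s ≤ g y - g x ∧ g y - g x ≤ (y - x) * β / s := by
    intro n x y h1 h2 h3
    rw [hgA n x h1 (h2.trans h3), hgA n y (h1.trans h2) h3]
    have hΔ := hstep n
    have hyx : (0:ℝ) ≤ y - x := by linarith
    have key : (b n + (y - (n:ℝ) * s) * (b (n+1) - b n) / s) -
        (b n + (x - (n:ℝ) * s) * (b (n+1) - b n) / s) = (y - x) * (b (n+1) - b n) / s := by
      ring
    rw [key]
    constructor
    · rw [div_le_div_iff₀ hs0 hs0]
      nlinarith [mul_nonneg (mul_nonneg hyx hs0.le)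
        (show (0:ℝ) ≤ b (n+1) - b n - 1 by linarith [hΔ.1])]
    · rw [div_le_div_iff₀ hs0 hs0]
      nlinarith [mul_nonneg (mul_nonneg hyx hs0.le)
        (show (0:ℝ) ≤ β - (b (n+1) - b n) by linarith [hΔ.2])]
  have hgC' : ∀ (n : ℕ) (x : ℝ), 0 ≤ x → x ≤ (n:ℝ) * s →
      ((n:ℝ) * s - x) / s ≤ b n - g x ∧ b n - g x ≤ ((n:ℝ) * s - x) * β / s := by
    intro n
    induction n with
    | zero =>
      intro x hx0 hx1
      simp only [Nat.cast_zero, zero_mul] at hx1 ⊢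
      have hx : x = 0 := le_antisymm hx1 hx0
      subst hx
      have h0 : g 0 = b 0 := by
        have := hgrid_eval 0
        simpa using this
      rw [h0, hb0]
      norm_num
    | succ m ih =>
      intro x hx0 hx1
      by_cases hc : (m:ℝ) * s ≤ x
      · have hx1' : x ≤ ((m:ℝ)+1) * s := by push_cast at hx1; linarith
        have hB := hgB m x (((m:ℝ)+1) * s) hc hx1' (le_refl _)
        have hcast : ((m:ℝ)+1) * s = ((m+1:ℕ):ℝ) * s := by push_cast; ring
        rw [hcast, hgrid_eval (m+1)] at hB
        push_cast at hB ⊢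
        exact hB
      · push_neg at hc
        have h1 := ih x hx0 (le_of_lt hc)
        have h2 := hstep m
        constructor
        · have he : ((m+1:ℕ):ℝ) * s - x = s + ((m:ℝ) * s - x) := by push_cast; ring
          rw [he, add_div, div_self (ne_of_gt hs0)]
          linarith [h1.1]
        · have he : (((m+1:ℕ):ℝ) * s - x) * β = s * β + ((m:ℝ) * s - x) * β := by
            push_cast; ring
          rw [he, add_div]
          have : s * β / s = β := by field_simp
          rw [this]
          linarith [h1.2]
  have hgC : ∀ x y : ℝ, 0 ≤ x → x ≤ y →
      (y - x) / s ≤ g y - g x ∧ g y - g x ≤ (y - x) * β / s := by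
    intro x y hx hxy
    have hy : 0 ≤ y := hx.trans hxy
    obtain ⟨hm1, hm2⟩ := hfloor_bounds y hy
    set m : ℕ := ⌊y / s⌋.toNat with hm_def
    by_cases hc : (m:ℝ) * s ≤ x
    · exact hgB m x y hc hxy (le_of_lt hm2)
    · push_neg at hc
      have h1 := hgC' m x hx (le_of_lt hc)
      have h2 := hgB m ((m:ℝ) * s) y (le_refl _) hm1 (le_of_lt hm2)
      rw [hgrid_eval m] at h2
      constructor
      · have he : (y - x) / s = (y - (m:ℝ) * s) / s + ((m:ℝ) * s - x) / s := by ring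
        rw [he]
        linarith [h1.1, h2.1]
      · have he : (y - x) * β / s = (y - (m:ℝ) * s) * β / s + ((m:ℝ) * s - x) * β / s := by
          ring
        rw [he]
        linarith [h1.2, h2.2]
  have hg0 : g 0 = 0 := by
    have := hgrid_eval 0
    simpa [hb0] using this
  -- key two-sided bound with L = s + β
  have hkey : ∀ x y : ℝ, 0 ≤ x → x ≤ y →
      (s + β)⁻¹ * (y - x) ≤ g y - g x ∧ g y - g x ≤ (s + β) * (y - x) := by
    intro x y hx hxy
    have h := hgC x y hx hxy
    have hyx : (0:ℝ) ≤ y - x := by linarith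
    have hsβ : (0:ℝ) < s + β := by linarith
    constructor
    · calc (s + β)⁻¹ * (y - x) ≤ s⁻¹ * (y - x) := by
            apply mul_le_mul_of_nonneg_right _ hyx
            exact inv_anti₀ hs0 (by linarith)
        _ = (y - x) / s := by rw [div_eq_mul_inv, mul_comm]
        _ ≤ g y - g x := h.1
    · calc g y - g x ≤ (y - x) * β / s := h.2
        _ ≤ (y - x) * (s + β) := by
            rw [mul_div_assoc]
            apply mul_le_mul_of_nonneg_left _ hyx
            calc β / s ≤ β := div_le_self hβ0 hs1
              _ ≤ s + β := by linarith
        _ = (s + β) * (y - x) := by ring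
  refine ⟨g, ⟨s + β, by linarith, ?_, ?_, ?_⟩, ?_⟩
  · -- bilipschitz
    intro x y hx hy
    rcases le_total x y with h | h
    · obtain ⟨h1, h2⟩ := hkey x y hx h
      have hsβ : (0:ℝ) < s + β := by linarith
      have hpos' : 0 ≤ g y - g x :=
        le_trans (mul_nonneg (inv_pos.mpr hsβ).le (by linarith)) h1
      have e1 : |g x - g y| = g y - g x := by
        rw [abs_sub_comm]; exact abs_of_nonneg hpos'
      have e2 : |x - y| = y - x := by
        rw [abs_sub_comm]; exact abs_of_nonneg (by linarith)
      rw [e1, e2]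
      exact ⟨h1, h2⟩
    · obtain ⟨h1, h2⟩ := hkey y x hy h
      have hsβ : (0:ℝ) < s + β := by linarith
      have hpos' : 0 ≤ g x - g y :=
        le_trans (mul_nonneg (inv_pos.mpr hsβ).le (by linarith)) h1
      have e1 : |g x - g y| = g x - g y := abs_of_nonneg hpos'
      have e2 : |x - y| = x - y := abs_of_nonneg (by linarith)
      rw [e1, e2]
      exact ⟨h1, h2⟩
  · -- nonneg
    intro x hx
    have := (hgC 0 x (le_refl 0) hx).1
    have h0 : (0:ℝ) ≤ (x - 0) / s := div_nonneg (by linarith) hs0.le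
    rw [hg0] at this
    simpa using le_trans h0 this
  · -- surjectivity
    intro z hz
    have hex : ∃ n : ℕ, z < b (n + 1) := by
      refine ⟨⌈z⌉.toNat, ?_⟩
      have h1 := hbn (⌈z⌉.toNat + 1)
      have h2 : z ≤ ((⌈z⌉.toNat : ℕ) : ℝ) := by
        have h3 : (0:ℤ) ≤ ⌈z⌉ := Int.ceil_nonneg hz
        have h4 : z ≤ ((⌈z⌉ : ℤ) : ℝ) := Int.le_ceil z
        have h5 : (((⌈z⌉.toNat : ℕ) : ℤ) : ℝ) = ((⌈z⌉ : ℤ) : ℝ) := by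
          exact_mod_cast congrArg (fun w : ℤ => (w : ℝ)) (Int.toNat_of_nonneg h3)
        rw [← h5] at h4
        exact_mod_cast h4
      push_cast at h1
      linarith
    set m : ℕ := Nat.find hex with hm_def
    have hm2 : z < b (m + 1) := Nat.find_spec hex
    have hm1 : b m ≤ z := by
      rcases Nat.eq_zero_or_pos m with h0 | h0
      · rw [h0, hb0]; exact hz
      · obtain ⟨k, hk⟩ : ∃ k, m = k + 1 := ⟨m - 1, by omega⟩
        have hlt : k < m := by omega
        rw [hm_def] at hlt
        have h2 := Nat.find_min hex hlt
        push_neg at h2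
        rw [hk]
        exact h2
    have hΔ := hstep m
    have hΔ0 : (0:ℝ) < b (m+1) - b m := by linarith [hΔ.1]
    set x : ℝ := (m:ℝ) * s + (z - b m) / (b (m+1) - b m) * s with hx_def
    have hr0 : 0 ≤ (z - b m) / (b (m+1) - b m) := div_nonneg (by linarith) hΔ0.le
    have hr1 : (z - b m) / (b (m+1) - b m) ≤ 1 := by
      rw [div_le_one hΔ0]
      linarith
    have hms0 : (0:ℝ) ≤ (m:ℝ) * s := by positivity
    have hrs0 : (0:ℝ) ≤ (z - b m) / (b (m+1) - b m) * s := mul_nonneg hr0 hs0.le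
    have hrs1 : (z - b m) / (b (m+1) - b m) * s ≤ s := by
      have := mul_le_mul_of_nonneg_right hr1 hs0.le
      linarith
    have hx0 : 0 ≤ x := by rw [hx_def]; linarith
    have hxlb : (m:ℝ) * s ≤ x := by rw [hx_def]; linarith
    have hxub : x ≤ ((m:ℝ)+1) * s := by rw [hx_def]; linarith
    refine ⟨x, hx0, ?_⟩
    rw [hgA m x hxlb hxub]
    have he : x - (m:ℝ) * s = (z - b m) / (b (m+1) - b m) * s := by rw [hx_def]; ring
    rw [he]
    field_simp
    ring
  · -- closeness
    intro x hx
    obtain ⟨hn1, hn2⟩ := hfloor_bounds x hx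
    set n : ℕ := ⌊x / s⌋.toNat with hn_def
    have hn0 : (0:ℝ) ≤ (n:ℝ) * s := by positivity
    have h1 : |f x - f ((n:ℝ) * s)| ≤ lam * s + eps := by
      have h := (hQI x ((n:ℝ) * s) hx hn0).2
      have habs : |x - (n:ℝ) * s| ≤ s := by
        rw [abs_of_nonneg (by linarith)]
        linarith
      calc |f x - f ((n:ℝ) * s)| ≤ lam * |x - (n:ℝ) * s| + eps := h
        _ ≤ lam * s + eps := by nlinarith
    have h2 : |f ((n:ℝ) * s) - b n| ≤ 2 * C + eps := by
      rw [abs_sub_comm]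
      exact hbclose n
    have h3 : |b n - g x| ≤ β := by
      have hB := hgB n ((n:ℝ) * s) x (le_refl _) hn1 (le_of_lt hn2)
      rw [hgrid_eval n] at hB
      have hlo : 0 ≤ g x - b n :=
        le_trans (div_nonneg (by linarith) hs0.le) hB.1
      rw [abs_sub_comm, abs_of_nonneg hlo]
      calc g x - b n ≤ (x - (n:ℝ) * s) * β / s := hB.2
        _ ≤ s * β / s := by gcongr <;> linarith
        _ = β := by field_simp
    calc |f x - g x| ≤ |f x - f ((n:ℝ) * s)| + |f ((n:ℝ) * s) - g x| := abs_sub_le _ _ _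
      _ ≤ |f x - f ((n:ℝ) * s)| + (|f ((n:ℝ) * s) - b n| + |b n - g x|) := by
          linarith [abs_sub_le (f ((n:ℝ) * s)) (b n) (g x)]
      _ ≤ (lam * s + eps) + (2 * C + eps) + β := by linarith
end

section
/- Let X be a geodesic δ-hyperbolic space and g an isometry of X such that for some x ∈ X the orbit map n ↦ gⁿ(x) from ℤ to X is a quasigeodesic. Then g does not preserve any horofunction: for any function h: X → ℝ satisfying the horofunction condition with constant D₁, the function h ∘ g is not equal to h (in fact, h(gⁿ(x)) is unbounded below or above along the orbit). -/
open Metric Set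

/-- The Gromov product `(y|z)_x`. -/
noncomputable def gromovProd {X : Type*} [MetricSpace X] (x y z : X) : ℝ :=
  (dist x y + dist x z - dist y z) / 2

/-- A unit-speed geodesic from `x` to `y`, defined on `[0, dist x y]`. -/
def IsGeodesicSeg {X : Type*} [MetricSpace X] (f : ℝ → X) (x y : X) : Prop :=
  f 0 = x ∧ f (dist x y) = y ∧
    ∀ s ∈ Set.Icc (0:ℝ) (dist x y), ∀ t ∈ Set.Icc (0:ℝ) (dist x y),
      dist (f s) (f t) = |s - t|

/-- A geodesic metric space: any two points are joined by a geodesic. -/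
def GeodesicSpace (X : Type*) [MetricSpace X] : Prop :=
  ∀ x y : X, ∃ f : ℝ → X, IsGeodesicSeg f x y

/-- A unit-speed geodesic ray, defined on `[0, ∞)`. -/
def IsGeodesicRay {X : Type*} [MetricSpace X] (c : ℝ → X) : Prop :=
  ∀ s ∈ Set.Ici (0:ℝ), ∀ t ∈ Set.Ici (0:ℝ), dist (c s) (c t) = |s - t|

/-- Two geodesic rays are asymptotic if one stays at bounded distance from the other. -/
def AsympRays {X : Type*} [MetricSpace X] (c c' : ℝ → X) : Prop :=
  ∃ K : ℝ, ∀ t, 0 ≤ t → ∃ s, 0 ≤ s ∧ dist (c t) (c' s) ≤ K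

/-- δ-hyperbolicity in the "equiradial" sense: on a geodesic triangle with vertices
`x,y,z`, points on the sides `[x,y]` and `[x,z]` that are equidistant from `x`, at distance
at most the Gromov product `(y|z)_x`, are at distance at most δ. -/
def GromovThin (X : Type*) [MetricSpace X] (δ : ℝ) : Prop :=
  ∀ (x y z : X) (f g : ℝ → X), IsGeodesicSeg f x y → IsGeodesicSeg g x z →
    ∀ s : ℝ, 0 ≤ s → s ≤ gromovProd x y z → dist (f s) (g s) ≤ δ

/-- δ-thin triangles: each side of a geodesic triangle lies in the closed δ-neighborhood
of the union of the other two sides. -/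
def ThinTriangles (X : Type*) [MetricSpace X] (δ : ℝ) : Prop :=
  ∀ (x y z : X) (fxy fyz fxz : ℝ → X),
    IsGeodesicSeg fxy x y → IsGeodesicSeg fyz y z → IsGeodesicSeg fxz x z →
    ∀ p ∈ fxy '' Set.Icc (0:ℝ) (dist x y),
      ∃ q ∈ (fyz '' Set.Icc (0:ℝ) (dist y z)) ∪ (fxz '' Set.Icc (0:ℝ) (dist x z)),
        dist p q ≤ δ

/-- `h` satisfies the (ray-based) horofunction condition about the boundary point
represented by the ray `c₀`, with constant `D₁`: if `w` lies within `5δ` of a geodesic ray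
from `x` tending to that boundary point, then `h w − h x` is within `D₁` of `−d(x,w)`. -/
def HoroRayCond {X : Type*} [MetricSpace X] (δ D₁ : ℝ) (c₀ : ℝ → X) (h : X → ℝ) : Prop :=
  ∀ x w : X,
    (∃ c : ℝ → X, IsGeodesicRay c ∧ c 0 = x ∧ AsympRays c c₀ ∧
      ∃ t, 0 ≤ t ∧ dist w (c t) ≤ 5 * δ) →
    |h w - h x + dist x w| ≤ D₁

open Filter Topology

section AuxLemmas

variable {X : Type*} [MetricSpace X]

lemma gromovProd_nonneg' (x y z : X) : 0 ≤ gromovProd x y z := by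
  have h := dist_triangle y x z
  have := dist_comm y x
  unfold gromovProd; linarith

lemma gromovProd_le_left' (x y z : X) : gromovProd x y z ≤ dist x y := by
  have := dist_triangle x y z
  unfold gromovProd; linarith

noncomputable def busA (c₀ : ℝ → X) (p : X) : ℝ := ⨅ m : ℕ, (dist p (c₀ m) - m)

variable {c₀ : ℝ → X}

lemma ray_dist (hc₀ : IsGeodesicRay c₀) (s t : ℝ) (hs : 0 ≤ s) (ht : s ≤ t) : dist (c₀ s) (c₀ t) = t - s := by
  rw [hc₀ s hs t (hs.trans ht), abs_of_nonpos (by linarith)]; ring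

lemma bseq_antitone (hc₀ : IsGeodesicRay c₀) (p : X) : Antitone (fun m : ℕ => dist p (c₀ m) - (m:ℝ)) := by
  apply antitone_nat_of_succ_le
  intro n
  have h1 : dist p (c₀ ((n:ℝ)+1)) ≤ dist p (c₀ n) + dist (c₀ n) (c₀ ((n:ℝ)+1)) :=
    dist_triangle _ _ _
  have h2 : dist (c₀ (n:ℝ)) (c₀ ((n:ℝ)+1)) = (n+1) - n :=
    ray_dist hc₀ _ _ (Nat.cast_nonneg n) (by linarith)
  push_cast
  linarith

lemma bseq_lb (hc₀ : IsGeodesicRay c₀) (p : X) (m : ℕ) : (m:ℝ) - dist p (c₀ 0) ≤ dist p (c₀ m) := by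
  have h1 : dist (c₀ 0) (c₀ m) = (m:ℝ) - 0 := ray_dist hc₀ _ _ le_rfl (Nat.cast_nonneg m)
  have h2 := dist_triangle (c₀ 0) p (c₀ m)
  have := dist_comm (c₀ 0) p
  linarith

lemma busA_bddBelow (hc₀ : IsGeodesicRay c₀) (p : X) :
    BddBelow (Set.range fun m : ℕ => dist p (c₀ m) - (m:ℝ)) := by
  refine ⟨-dist p (c₀ 0), ?_⟩
  rintro _ ⟨m, rfl⟩
  have := bseq_lb hc₀ p m
  dsimp only
  linarith

lemma busA_le (hc₀ : IsGeodesicRay c₀) (p : X) (m : ℕ) : busA c₀ p ≤ dist p (c₀ m) - m :=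
  ciInf_le (busA_bddBelow hc₀ p) m

lemma busA_le_d0 (hc₀ : IsGeodesicRay c₀) (p : X) : busA c₀ p ≤ dist p (c₀ 0) := by
  have := busA_le hc₀ p 0
  simpa using this

lemma busA_tendsto (hc₀ : IsGeodesicRay c₀) (p : X) :
    Tendsto (fun m : ℕ => dist p (c₀ m) - (m:ℝ)) atTop (𝓝 (busA c₀ p)) :=
  tendsto_atTop_ciInf (bseq_antitone hc₀ p) (busA_bddBelow hc₀ p)

end AuxLemmas

section Horo

variable {X : Type*} [MetricSpace X] [ProperSpace X]

lemma horo_approx {δ D₁ : ℝ} (hδ : 0 ≤ δ)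
    (hgeo : GeodesicSpace X) (hhyp : GromovThin X δ)
    {c₀ : ℝ → X} (hc₀ : IsGeodesicRay c₀) {h : X → ℝ} (hh : HoroRayCond δ D₁ c₀ h)
    (p : X) : |h p - h (c₀ 0) - busA c₀ p| ≤ 2*D₁ + δ := by
  set d₀ := dist p (c₀ 0) with hd₀def
  have hd₀0 : 0 ≤ d₀ := dist_nonneg
  set a := busA c₀ p with hadef
  have ha_d₀ : a ≤ d₀ := busA_le_d0 hc₀ p
  choose F hF using fun m : ℕ => hgeo p (c₀ m)
  have hF0 : ∀ m : ℕ, F m 0 = p := fun m => (hF m).1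
  have hbm_le : ∀ m : ℕ, dist p (c₀ m) - (m:ℝ) ≤ d₀ := by
    intro m
    have := bseq_antitone hc₀ p (Nat.zero_le m)
    simpa using this
  have ha_le : ∀ m : ℕ, a ≤ dist p (c₀ m) - (m:ℝ) := busA_le hc₀ p
  obtain ⟨U, hU⟩ := Ultrafilter.exists_le (Filter.atTop : Filter ℕ)
  -- existence of ultrafilter limits
  have hex : ∀ u : ℝ, ∃ y, Tendsto (fun m : ℕ => F m (max u 0)) ↑U (𝓝 y) := by
    intro u
    set v := max u 0 with hv
    have hv0 : 0 ≤ v := le_max_right _ _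
    have hev : ∀ᶠ m : ℕ in atTop, F m v ∈ closedBall p v := by
      filter_upwards [eventually_ge_atTop ⌈v + d₀⌉₊] with m hm
      have hvd : v ≤ dist p (c₀ m) := by
        have h1 : v + d₀ ≤ (m:ℝ) := by exact_mod_cast Nat.ceil_le.mp hm
        have := bseq_lb hc₀ p m
        linarith
      have h0 : dist (F m 0) (F m v) = |0 - v| :=
        (hF m).2.2 0 ⟨le_rfl, dist_nonneg⟩ v ⟨hv0, hvd⟩
      rw [hF0] at h0
      rw [mem_closedBall, dist_comm, h0, abs_of_nonpos (by linarith)]; linarith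
    have hmem : ↑(U.map fun m : ℕ => F m v) ≤ 𝓟 (closedBall p v) := by
      rw [Filter.le_principal_iff]
      exact Filter.mem_map.mpr (hU hev)
    obtain ⟨y, -, hy⟩ := (isCompact_closedBall p v).ultrafilter_le_nhds _ hmem
    exact ⟨y, hy⟩
  choose c hc using hex
  have hc0 : c 0 = p := by
    have h1 : Tendsto (fun m : ℕ => F m (max 0 0)) ↑U (𝓝 p) := by
      simp only [max_self]
      simpa [hF0] using (tendsto_const_nhds : Tendsto (fun _ : ℕ => p) ↑U (𝓝 p))
    exact tendsto_nhds_unique (hc 0) h1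
  have hray : IsGeodesicRay c := by
    intro s hs t ht
    rw [Set.mem_Ici] at hs ht
    have hcs := hc s; rw [max_eq_left hs] at hcs
    have hct := hc t; rw [max_eq_left ht] at hct
    have h1 : Tendsto (fun m : ℕ => dist (F m s) (F m t)) ↑U (𝓝 (dist (c s) (c t))) :=
      hcs.dist hct
    have h2 : ∀ᶠ m : ℕ in ↑U, dist (F m s) (F m t) = |s - t| := by
      apply hU
      filter_upwards [eventually_ge_atTop ⌈max s t + d₀⌉₊] with m hm
      have hst : max s t + d₀ ≤ (m:ℝ) := by exact_mod_cast Nat.ceil_le.mp hm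
      have hdm : max s t ≤ dist p (c₀ m) := by
        have := bseq_lb hc₀ p m; linarith
      exact (hF m).2.2 s ⟨hs, (le_max_left s t).trans hdm⟩ t ⟨ht, (le_max_right s t).trans hdm⟩
    exact tendsto_nhds_unique (h1.congr' h2) tendsto_const_nhds
  -- thin estimate along the approximating geodesics
  have hthin : ∀ u : ℝ, d₀ ≤ u → ∀ m : ℕ, u ≤ dist p (c₀ m) →
      dist (F m u) (c₀ (u - (dist p (c₀ m) - m))) ≤ δ := by
    intro u hu m hum
    set dm := dist p (c₀ m) with hdmdef
    have hdm0 : 0 ≤ dm := dist_nonneg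
    have hcm : dist (c₀ (m:ℝ)) p = dm := dist_comm _ _
    have hm0 : dist (c₀ (m:ℝ)) (c₀ 0) = (m:ℝ) := by
      rw [dist_comm, ray_dist hc₀ 0 m le_rfl (Nat.cast_nonneg m)]; ring
    have hf : IsGeodesicSeg (fun s => F m (dm - s)) (c₀ (m:ℝ)) p := by
      refine ⟨?_, ?_, ?_⟩
      · show F m (dm - 0) = c₀ (m:ℝ)
        rw [sub_zero]; exact (hF m).2.1
      · show F m (dm - dist (c₀ (m:ℝ)) p) = p
        rw [hcm, sub_self]; exact hF0 m
      · intro s hs t ht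
        rw [hcm] at hs ht
        have heq := (hF m).2.2 (dm - s) ⟨by linarith [hs.2], by linarith [hs.1]⟩
          (dm - t) ⟨by linarith [ht.2], by linarith [ht.1]⟩
        show dist (F m (dm - s)) (F m (dm - t)) = |s - t|
        rw [heq, show dm - s - (dm - t) = -(s - t) by ring, abs_neg]
    have hl : IsGeodesicSeg (fun s => c₀ ((m:ℝ) - s)) (c₀ (m:ℝ)) (c₀ 0) := by
      refine ⟨?_, ?_, ?_⟩
      · show c₀ ((m:ℝ) - 0) = c₀ (m:ℝ); rw [sub_zero]
      · show c₀ ((m:ℝ) - dist (c₀ (m:ℝ)) (c₀ 0)) = c₀ 0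
        rw [hm0, sub_self]
      · intro s hs t ht
        rw [hm0] at hs ht
        show dist (c₀ ((m:ℝ) - s)) (c₀ ((m:ℝ) - t)) = |s - t|
        rw [hc₀ _ (Set.mem_Ici.mpr (by linarith [hs.2])) _ (Set.mem_Ici.mpr (by linarith [ht.2])),
          show (m:ℝ) - s - ((m:ℝ) - t) = -(s - t) by ring, abs_neg]
    have hgp : dm - u ≤ gromovProd (c₀ (m:ℝ)) p (c₀ 0) := by
      unfold gromovProd
      rw [hcm, hm0]
      have := hbm_le m
      rw [← hdmdef] at this
      linarith
    have hth := hhyp (c₀ (m:ℝ)) p (c₀ 0) _ _ hf hl (dm - u) (by linarith) hgp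
    rw [show dm - (dm - u) = u by ring, show (m:ℝ) - (dm - u) = u - (dm - (m:ℝ)) by ring] at hth
    exact hth
  -- the limit ray stays δ-close to the shifted c₀
  have hclose : ∀ u : ℝ, d₀ ≤ u → dist (c u) (c₀ (u - a)) ≤ δ := by
    intro u hu
    have hu0 : 0 ≤ u := hd₀0.trans hu
    have hcu := hc u; rw [max_eq_left hu0] at hcu
    have h1 : ∀ᶠ m : ℕ in ↑U,
        dist (c u) (c₀ (u - a)) ≤ dist (c u) (F m u) + δ + ((dist p (c₀ m) - m) - a) := by
      apply hU
      filter_upwards [eventually_ge_atTop ⌈u + d₀⌉₊] with m hm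
      have hum : u ≤ dist p (c₀ m) := by
        have h1 : u + d₀ ≤ (m:ℝ) := by exact_mod_cast Nat.ceil_le.mp hm
        have := bseq_lb hc₀ p m
        linarith
      have t1 := hthin u hu m hum
      set bm := dist p (c₀ m) - (m:ℝ) with hbmdef
      have hbm1 : bm ≤ d₀ := hbm_le m
      have hbm2 : a ≤ bm := ha_le m
      have t2 : dist (c₀ (u - bm)) (c₀ (u - a)) = bm - a := by
        rw [ray_dist hc₀ (u - bm) (u - a) (by linarith) (by linarith)]; ring
      have t3 := dist_triangle4 (c u) (F m u) (c₀ (u - bm)) (c₀ (u - a))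
      rw [t2] at t3
      linarith
    have h2 : Tendsto (fun m : ℕ =>
        dist (c u) (F m u) + δ + ((dist p (c₀ m) - m) - a)) ↑U (𝓝 (0 + δ + 0)) := by
      refine Tendsto.add (Tendsto.add ?_ tendsto_const_nhds) ?_
      · simpa using (tendsto_const_nhds.dist hcu :
          Tendsto (fun m : ℕ => dist (c u) (F m u)) ↑U (𝓝 (dist (c u) (c u))))
      · have hb : Tendsto (fun m : ℕ => dist p (c₀ m) - (m:ℝ)) ↑U (𝓝 a) :=
          (busA_tendsto hc₀ p).mono_left hU
        simpa using hb.sub (tendsto_const_nhds : Tendsto (fun _ : ℕ => a) ↑U (𝓝 a))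
    have := ge_of_tendsto h2 h1
    linarith
  -- c is asymptotic to c₀
  have hay : AsympRays c c₀ := by
    refine ⟨2*d₀ + δ, fun t ht => ?_⟩
    by_cases htd : d₀ ≤ t
    · exact ⟨t - a, by linarith, (hclose t htd).trans (by linarith)⟩
    · refine ⟨0, le_rfl, ?_⟩
      have h1 : dist (c t) (c 0) = |t - 0| := hray t (Set.mem_Ici.mpr ht) 0 (Set.mem_Ici.mpr le_rfl)
      have h2 := dist_triangle (c t) (c 0) (c₀ 0)
      rw [h1, hc0, sub_zero, abs_of_nonneg ht] at h2
      rw [← hd₀def] at h2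
      linarith
  -- first horofunction estimate: along the ray c
  have hpd : dist p (c d₀) = d₀ := by
    have := hray 0 (Set.mem_Ici.mpr le_rfl) d₀ (Set.mem_Ici.mpr hd₀0)
    rw [hc0, zero_sub, abs_neg, abs_of_nonneg hd₀0] at this
    exact this
  have hA : |h (c d₀) - h p + d₀| ≤ D₁ := by
    have := hh p (c d₀) ⟨c, hray, hc0, hay, d₀, hd₀0, by rw [dist_self]; linarith⟩
    rwa [hpd] at this
  -- second horofunction estimate: from c₀ 0
  have hB : |h (c d₀) - h (c₀ 0) + dist (c₀ 0) (c d₀)| ≤ D₁ := by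
    refine hh (c₀ 0) (c d₀) ⟨c₀, hc₀, rfl, ⟨0, fun t ht => ⟨t, ht, by simp⟩⟩,
      d₀ - a, by linarith, ?_⟩
    have := hclose d₀ le_rfl
    linarith
  have hdist : |dist (c₀ 0) (c d₀) - (d₀ - a)| ≤ δ := by
    have h1 : dist (c₀ 0) (c₀ (d₀ - a)) = d₀ - a := by
      rw [ray_dist hc₀ 0 (d₀ - a) le_rfl (by linarith)]; ring
    have h2 := hclose d₀ le_rfl
    have tri1 := dist_triangle (c₀ 0) (c₀ (d₀ - a)) (c d₀)
    have tri2 := dist_triangle (c₀ 0) (c d₀) (c₀ (d₀ - a))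
    have hcomm := dist_comm (c₀ (d₀ - a)) (c d₀)
    rw [abs_le]
    constructor <;> [skip; skip] <;> [linarith [h1 ▸ tri2]; linarith [h1 ▸ tri1]]
  rw [abs_le] at hA hB hdist ⊢
  constructor <;> linarith [hA.1, hA.2, hB.1, hB.2, hdist.1, hdist.2]

end Horo

section FourPt

variable {X : Type*} [MetricSpace X]

lemma four_pt {δ : ℝ} (hgeo : GeodesicSpace X) (hhyp : GromovThin X δ)
    {c₀ : ℝ → X} (hc₀ : IsGeodesicRay c₀) (y p q : X) :
    min (dist y p - busA c₀ p) (dist y q - busA c₀ q) + busA c₀ y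
      ≤ 2 * gromovProd y p q + 2*δ := by
  refine le_of_forall_pos_le_add fun ε hε => ?_
  obtain ⟨m₁, hm₁⟩ : ∃ m : ℕ, dist p (c₀ m) - (m:ℝ) < busA c₀ p + ε :=
    exists_lt_of_ciInf_lt (lt_add_of_pos_right _ hε)
  obtain ⟨m₂, hm₂⟩ : ∃ m : ℕ, dist q (c₀ m) - (m:ℝ) < busA c₀ q + ε :=
    exists_lt_of_ciInf_lt (lt_add_of_pos_right _ hε)
  set m := max m₁ m₂ with hmdef
  have hp' : dist p (c₀ m) - (m:ℝ) ≤ busA c₀ p + ε :=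
    le_trans (bseq_antitone hc₀ p (le_max_left m₁ m₂)) hm₁.le
  have hq' : dist q (c₀ m) - (m:ℝ) ≤ busA c₀ q + ε :=
    le_trans (bseq_antitone hc₀ q (le_max_right m₁ m₂)) hm₂.le
  have hy' : busA c₀ y ≤ dist y (c₀ m) - (m:ℝ) := busA_le hc₀ y m
  set s := min (gromovProd y p (c₀ m)) (gromovProd y q (c₀ m)) with hsdef
  have hs0 : 0 ≤ s := le_min (gromovProd_nonneg' _ _ _) (gromovProd_nonneg' _ _ _)
  obtain ⟨f, hf⟩ := hgeo y p
  obtain ⟨k, hk⟩ := hgeo y (c₀ m)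
  obtain ⟨l, hl⟩ := hgeo y q
  have h1 : dist (f s) (k s) ≤ δ := hhyp y p (c₀ m) f k hf hk s hs0 (min_le_left _ _)
  have h2 : dist (l s) (k s) ≤ δ := hhyp y q (c₀ m) l k hl hk s hs0 (min_le_right _ _)
  have hsp : s ≤ dist y p := (min_le_left _ _).trans (gromovProd_le_left' _ _ _)
  have hsq : s ≤ dist y q := (min_le_right _ _).trans (gromovProd_le_left' _ _ _)
  have hfp : dist p (f s) = dist y p - s := by
    have heq := hf.2.2 (dist y p) ⟨dist_nonneg, le_rfl⟩ s ⟨hs0, hsp⟩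
    rw [hf.2.1] at heq
    rw [heq, abs_of_nonneg (by linarith)]
  have hlq : dist q (l s) = dist y q - s := by
    have heq := hl.2.2 (dist y q) ⟨dist_nonneg, le_rfl⟩ s ⟨hs0, hsq⟩
    rw [hl.2.1] at heq
    rw [heq, abs_of_nonneg (by linarith)]
  have hpq : dist p q ≤ (dist y p - s) + (dist y q - s) + 2*δ := by
    have t1 := dist_triangle4 p (f s) (l s) q
    have t2 := dist_triangle (f s) (k s) (l s)
    have t3 := dist_comm (l s) (k s)
    have t4 := dist_comm q (l s)
    linarith [hfp, hlq]
  have hsl : min (dist y p - busA c₀ p) (dist y q - busA c₀ q) + busA c₀ y - ε ≤ 2*s := by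
    rcases le_total (gromovProd y p (c₀ m)) (gromovProd y q (c₀ m)) with hcc | hcc
    · have hseq : s = gromovProd y p (c₀ m) := min_eq_left hcc
      have hmle : min (dist y p - busA c₀ p) (dist y q - busA c₀ q)
          ≤ dist y p - busA c₀ p := min_le_left _ _
      rw [hseq]
      unfold gromovProd
      linarith
    · have hseq : s = gromovProd y q (c₀ m) := min_eq_right hcc
      have hmle : min (dist y p - busA c₀ p) (dist y q - busA c₀ q)
          ≤ dist y q - busA c₀ q := min_le_right _ _
      rw [hseq]
      unfold gromovProd
      linarith
  have hfin : 2*s - 2*δ ≤ 2 * gromovProd y p q := by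
    unfold gromovProd
    linarith
  linarith

lemma exists_two_pow_gt (s r : ℝ) (hs : 0 ≤ s) : ∃ k : ℕ, s * k + r < 2^k := by
  obtain ⟨j, hj⟩ := pow_unbounded_of_one_lt (R := ℝ) (s+1) one_lt_two
  obtain ⟨k₀, hk₀⟩ := exists_nat_gt (r + s * j)
  refine ⟨k₀ + j, ?_⟩
  have h1 : (k₀:ℝ) ≤ 2^k₀ := by exact_mod_cast (Nat.lt_two_pow_self (n := k₀)).le
  have h2 : (s+1) * k₀ ≤ 2^j * 2^k₀ :=
    mul_le_mul hj.le h1 (Nat.cast_nonneg _) (by positivity)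
  have h3 : (2:ℝ)^(k₀+j) = 2^j * 2^k₀ := by rw [pow_add]; ring
  rw [h3]
  push_cast
  nlinarith [hk₀, h2, hs, (Nat.cast_nonneg j : (0:ℝ) ≤ (j:ℝ))]

lemma zpow_apply_add (g : X ≃ᵢ X) (k l : ℤ) (y : X) :
    (g^k) ((g^l) y) = (g^(k+l)) y := by
  rw [zpow_add, IsometryEquiv.mul_apply]

end FourPt

/-- An isometry with quasigeodesic orbit (a loxodromic) preserves no horofunction:
`h ∘ g ≠ h`; in fact `h (gⁿ x)` is unbounded above or below along the orbit. -/
theorem stmt_12 {X : Type*} [MetricSpace X] [ProperSpace X]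
    (δ D₁ : ℝ) (hδ : 0 ≤ δ) (hD₁ : 0 ≤ D₁) (hgeo : GeodesicSpace X) (hhyp : GromovThin X δ)
    (g : X ≃ᵢ X) (x : X)
    (horbit : ∃ lam eps : ℝ, 1 ≤ lam ∧ 0 ≤ eps ∧ ∀ m n : ℤ,
      lam⁻¹ * |(m : ℝ) - n| - eps ≤ dist ((g ^ m) x) ((g ^ n) x) ∧
      dist ((g ^ m) x) ((g ^ n) x) ≤ lam * |(m : ℝ) - n| + eps)
    (c₀ : ℝ → X) (hc₀ : IsGeodesicRay c₀)
    (h : X → ℝ) (hh : HoroRayCond δ D₁ c₀ h) :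
    (h ∘ g ≠ h) ∧
      (¬ BddAbove (Set.range fun n : ℤ => h ((g ^ n) x)) ∨
        ¬ BddBelow (Set.range fun n : ℤ => h ((g ^ n) x))) := by
  obtain ⟨lam, eps, hlam, heps, hQ⟩ := horbit
  have hlam0 : (0:ℝ) < lam := lt_of_lt_of_le one_pos hlam
  -- orbit distance identities
  have hDsymm : ∀ n : ℤ, dist x ((g^(-n)) x) = dist ((g^n) x) x := by
    intro n
    have hd := IsometryEquiv.dist_eq (g^n) x ((g^(-n)) x)
    rw [zpow_apply_add, add_neg_cancel, zpow_zero] at hd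
    simpa using hd.symm
  have hD2 : ∀ n : ℤ, dist ((g^n) x) ((g^(-n)) x) = dist ((g^(2*n)) x) x := by
    intro n
    have hd := IsometryEquiv.dist_eq (g^n) ((g^n) x) ((g^(-n)) x)
    rw [zpow_apply_add, zpow_apply_add, add_neg_cancel, zpow_zero,
      show n + n = 2*n by ring] at hd
    simpa using hd.symm
  -- the key unboundedness
  have key : ¬ BddAbove (Set.range fun n : ℤ => h ((g ^ n) x)) := by
    rintro ⟨ub, hub⟩
    have hub' : ∀ n : ℤ, h ((g^n) x) ≤ ub := fun n => hub (Set.mem_range_self n)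
    set M₁ := ub - h (c₀ 0) + (2*D₁ + δ) with hM₁def
    have haM : ∀ n : ℤ, busA c₀ ((g^n) x) ≤ M₁ := by
      intro n
      have h1 := horo_approx hδ hgeo hhyp hc₀ hh ((g^n) x)
      rw [abs_le] at h1
      have := hub' n
      linarith [h1.1]
    set C₀ := M₁ - busA c₀ x + 2*δ with hC₀def
    have hstep : ∀ n : ℤ, dist ((g^(2*n)) x) x ≤ dist ((g^n) x) x + C₀ := by
      intro n
      have h4 := four_pt hgeo hhyp hc₀ x ((g^n) x) ((g^(-n)) x)
      unfold gromovProd at h4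
      rw [hDsymm n, hD2 n, dist_comm x ((g^n) x)] at h4
      rcases min_cases (dist ((g^n) x) x - busA c₀ ((g^n) x))
          (dist ((g^n) x) x - busA c₀ ((g^(-n)) x)) with ⟨hm, -⟩ | ⟨hm, -⟩ <;>
        rw [hm] at h4 <;> linarith [haM n, haM (-n)]
    have hiter : ∀ k : ℕ, dist ((g^((2:ℤ)^k)) x) x ≤ dist ((g^(1:ℤ)) x) x + k * C₀ := by
      intro k
      induction k with
      | zero => norm_num
      | succ k ih =>
        have h2 := hstep ((2:ℤ)^k)
        rw [show (2:ℤ)^(k+1) = 2 * 2^k by ring]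
        push_cast
        linarith
    have hlow : ∀ k : ℕ, lam⁻¹ * 2^k - eps ≤ dist ((g^((2:ℤ)^k)) x) x := by
      intro k
      have hq := (hQ ((2:ℤ)^k) 0).1
      rw [zpow_zero] at hq
      simp only [IsometryEquiv.coe_one, id_eq] at hq
      have he : |(((2:ℤ)^k : ℤ):ℝ) - ((0:ℤ):ℝ)| = 2^k := by
        push_cast
        rw [sub_zero, abs_of_nonneg (by positivity)]
      rwa [he] at hq
    set s := max (lam * C₀) 0 with hsdef
    set r := lam * (dist ((g^(1:ℤ)) x) x + eps) with hrdef
    obtain ⟨k, hk⟩ := exists_two_pow_gt s r (le_max_right _ _)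
    clear_value s r C₀ M₁
    have h1 := hiter k
    have h2 := hlow k
    have h3 : lam⁻¹ * 2^k ≤ dist ((g^(1:ℤ)) x) x + k*C₀ + eps := by linarith
    have h4 : (2:ℝ)^k ≤ lam * (dist ((g^(1:ℤ)) x) x + k*C₀ + eps) := by
      have hm := mul_le_mul_of_nonneg_left h3 hlam0.le
      rwa [← mul_assoc, mul_inv_cancel₀ hlam0.ne', one_mul] at hm
    have h5 : lam * (dist ((g^(1:ℤ)) x) x + k*C₀ + eps) ≤ r + s*k := by
      have hk0 : (0:ℝ) ≤ (k:ℝ) := Nat.cast_nonneg k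
      have hmc : (lam*C₀)*(k:ℝ) ≤ s*(k:ℝ) :=
        mul_le_mul_of_nonneg_right (by rw [hsdef]; exact le_max_left _ _) hk0
      have hexp : lam * (dist ((g^(1:ℤ)) x) x + k*C₀ + eps)
          = r + (lam*C₀)*(k:ℝ) := by rw [hrdef]; ring
      linarith
    linarith
  refine ⟨?_, Or.inl key⟩
  intro heq
  apply key
  have hgw : ∀ w, h (g w) = h w := fun w => congrFun heq w
  have hval : ∀ n : ℤ, h ((g^n) x) = h x := by
    intro n
    induction n using Int.induction_on with
    | zero => simp
    | succ n ih =>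
      have he : (g^((n:ℤ)+1)) x = g ((g^(n:ℤ)) x) := by
        rw [show ((n:ℤ)+1) = 1 + (n:ℤ) by ring, ← zpow_apply_add, zpow_one]
      rw [he, hgw, ih]
    | pred n ih =>
      have he : g ((g^(-(n:ℤ)-1)) x) = (g^(-(n:ℤ))) x := by
        have := zpow_apply_add g 1 (-(n:ℤ)-1) x
        rw [zpow_one] at this
        rw [this, show (1 + (-(n:ℤ)-1)) = -(n:ℤ) by ring]
      have := hgw ((g^(-(n:ℤ)-1)) x)
      rw [he, ih] at this
      exact this.symm
  exact ⟨h x, by rintro z ⟨n, rfl⟩; exact (hval n).le⟩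
end

section
/- Let 𝓗(Υ) be the combinatorial horoball over a connected graph Υ with simplicial metric. For vertices (v,n) and (w,n) at the same level n, the distance in 𝓗(Υ) between them is at most 2·max(0, ⌈log d_Υ(v,w)⌉ − n) + 3, where d_Υ denotes graph distance in Υ. -/
/-- The combinatorial horoball over a graph `G`: vertices `V × ℕ`; a vertical edge joins
`(v,n)` and `(v,n+1)`; a horizontal edge joins `(v,n)` and `(w,n)` when `d_G(v,w) ≤ eⁿ`. -/
def horoball {V : Type*} (G : SimpleGraph V) : SimpleGraph (V × ℕ) where
  Adj a b :=
    (a.1 = b.1 ∧ (b.2 = a.2 + 1 ∨ a.2 = b.2 + 1)) ∨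
    (a.2 = b.2 ∧ a.1 ≠ b.1 ∧ (G.dist a.1 b.1 : ℝ) ≤ Real.exp a.2)
  symm := by
    refine ⟨?_⟩
    rintro ⟨x, m⟩ ⟨y, n⟩ (⟨h1, h2⟩ | ⟨h1, h2, h3⟩)
    · exact Or.inl ⟨h1.symm, h2.symm⟩
    · refine Or.inr ⟨h1.symm, h2.symm, ?_⟩
      simp only at h1 h3 ⊢
      rw [SimpleGraph.dist_comm, ← h1]
      exact h3
  loopless := by
    refine ⟨?_⟩
    rintro ⟨x, m⟩ (⟨_, h | h⟩ | ⟨_, h, _⟩)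
    · omega
    · omega
    · exact h rfl

/-- A vertical walk in the horoball from `(v, a+k)` down to `(v, a)`. -/
def vertWalk {V : Type*} (G : SimpleGraph V) (v : V) (a : ℕ) :
    (k : ℕ) → (horoball G).Walk (v, a + k) (v, a)
  | 0 => SimpleGraph.Walk.nil
  | k + 1 => SimpleGraph.Walk.cons
      (show (horoball G).Adj (v, a + (k + 1)) (v, a + k) from Or.inl ⟨rfl, Or.inr rfl⟩)
      (vertWalk G v a k)

lemma vertWalk_length {V : Type*} (G : SimpleGraph V) (v : V) (a k : ℕ) :
    (vertWalk G v a k).length = k := by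
  induction k with
  | zero => rfl
  | succ k ih => simp [vertWalk, ih]

/-- In the combinatorial horoball over a connected graph, the distance between two
vertices `(v,n)` and `(w,n)` at the same level is at most
`2·max(0, ⌈log d_G(v,w)⌉ - n) + 3`. -/
theorem stmt_14 {V : Type*} (G : SimpleGraph V) (hG : G.Connected) (v w : V) (n : ℕ) :
    ((horoball G).dist (v, n) (w, n) : ℝ) ≤
      2 * max 0 ((⌈Real.log (G.dist v w)⌉ : ℝ) - n) + 3 := by
  have hmax : (0 : ℝ) ≤ max 0 ((⌈Real.log (G.dist v w)⌉ : ℝ) - n) := le_max_left _ _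
  by_cases hvw : v = w
  · subst hvw
    rw [SimpleGraph.dist_self]
    push_cast
    linarith
  · set d : ℕ := G.dist v w with hd
    have hd1 : 1 ≤ d := (hG.pos_dist_of_ne hvw)
    have hdpos : (0 : ℝ) < d := by exact_mod_cast hd1
    have hlog0 : 0 ≤ Real.log d := Real.log_nonneg (by exact_mod_cast hd1)
    set c : ℕ := ⌈Real.log d⌉₊ with hc
    set k : ℕ := max n c - n with hk
    -- horizontal edge at level n + k
    have hck : Real.log d ≤ (n + k : ℕ) := by
      have h1 : Real.log d ≤ (c : ℝ) := Nat.le_ceil _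
      have h2 : c ≤ n + k := by omega
      have : (c : ℝ) ≤ (n + k : ℕ) := by exact_mod_cast h2
      linarith
    have hadj : (horoball G).Adj (v, n + k) (w, n + k) := by
      refine Or.inr ⟨rfl, hvw, ?_⟩
      calc ((G.dist v w : ℕ) : ℝ) = (d : ℝ) := by rw [hd]
        _ ≤ Real.exp ((n + k : ℕ) : ℝ) := by
            rw [← Real.exp_log hdpos]; exact Real.exp_le_exp.mpr hck
    have hdist : (horoball G).dist (v, n) (w, n) ≤ 2 * k + 1 := by
      have h := SimpleGraph.dist_le
        ((vertWalk G v n k).reverse.append (SimpleGraph.Walk.cons hadj (vertWalk G w n k)))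
      simp only [SimpleGraph.Walk.length_append, SimpleGraph.Walk.length_reverse,
        SimpleGraph.Walk.length_cons, vertWalk_length] at h
      omega
    have hdistR : ((horoball G).dist (v, n) (w, n) : ℝ) ≤ 2 * (k : ℝ) + 1 := by
      exact_mod_cast hdist
    -- bound k
    have hkbound : (k : ℝ) ≤ max 0 ((⌈Real.log (G.dist v w)⌉ : ℝ) - n) + 1 := by
      rcases le_or_gt c n with h | h
      · have : k = 0 := by omega
        rw [this]; push_cast; linarith
      · have hkc : k = c - n := by omega
        have hceil : ((c : ℤ) : ℝ) = (⌈Real.log (G.dist v w)⌉ : ℝ) := by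
          rw [hc, hd]
          exact_mod_cast congrArg (Int.cast : ℤ → ℝ) (Int.natCast_ceil_eq_ceil hlog0)
        have : (k : ℝ) = (c : ℝ) - n := by
          rw [hkc]
          have : n ≤ c := le_of_lt h
          push_cast [Nat.cast_sub this]
          ring
        rw [this]
        have hcc : (c : ℝ) = (⌈Real.log (G.dist v w)⌉ : ℝ) := by exact_mod_cast hceil
        rw [hcc]
        have := le_max_right (0 : ℝ) ((⌈Real.log (G.dist v w)⌉ : ℝ) - n)
        linarith
    linarith
end

section
/- Let Y be a δ-hyperbolic space with bounded parabolic action by a group P, with fellow-traveling constant D from the asynchronous-to-synchronous lemma. If c is a geodesic ray based at y₀, p, p' ∈ P satisfy d(p(y₀), p'(y₀)) ≤ D, and t ≥ D + 5δ, then d(pc(t), p'c(t)) ≤ D. -/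
open Metric Set

/-- If `d(p y₀, p' y₀) ≤ D` and `t ≥ D + 5δ`, then the rays `p c` and `p' c`
synchronously `D`-fellow-travel at time `t`. -/
theorem stmt_17 {Y P : Type*} [MetricSpace Y] [ProperSpace Y] [Group P] [MulAction P Y]
    (δ D : ℝ) (hδ : 0 ≤ δ)
    (hgeo : GeodesicSpace Y)
    (hiso : ∀ (p : P) (a b : Y), dist (p • a) (p • b) = dist a b)
    -- the Gromov boundary of `Y` is a single point: all rays are asymptotic
    (hone : ∀ c₁ c₂ : ℝ → Y, IsGeodesicRay c₁ → IsGeodesicRay c₂ → AsympRays c₁ c₂)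
    -- ideal triangles (two asymptotic rays and the segment joining their basepoints)
    -- are 5δ-thin:
    (hThin : ∀ (c₁ c₂ f : ℝ → Y), IsGeodesicRay c₁ → IsGeodesicRay c₂ →
      IsGeodesicSeg f (c₁ 0) (c₂ 0) → ∀ t, 0 ≤ t →
        (∃ s, 0 ≤ s ∧ dist (c₁ t) (c₂ s) ≤ 5 * δ) ∨
        (∃ s ∈ Set.Icc (0:ℝ) (dist (c₁ 0) (c₂ 0)), dist (c₁ t) (f s) ≤ 5 * δ))
    -- `D` is the asynchronous-to-synchronous fellow-traveling constant:
    (hDft : ∀ c' : ℝ → Y, IsGeodesicRay c' → ∀ (p : P) (t : ℝ), 0 ≤ t →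
      (∃ s, 0 ≤ s ∧ dist (c' t) (p • c' s) ≤ 5 * δ) → dist (c' t) (p • c' t) ≤ D)
    (c : ℝ → Y) (hc : IsGeodesicRay c) (y₀ : Y) (hc0 : c 0 = y₀)
    (p p' : P) (hpp : dist (p • y₀) (p' • y₀) ≤ D)
    (t : ℝ) (ht : D + 5 * δ ≤ t) :
    dist (p • c t) (p' • c t) ≤ D := by
  have hD0 : 0 ≤ D := le_trans dist_nonneg hpp
  have ht0 : 0 ≤ t := by nlinarith
  set q := p⁻¹ * p' with hq
  have hray2 : IsGeodesicRay (fun s => q • c s) := by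
    intro s hs u hu
    simpa [hiso] using hc s hs u hu
  have hd0 : dist (c 0) (q • c 0) ≤ D := by
    have h1 : dist (p • c 0) (p • q • c 0) = dist (c 0) (q • c 0) := hiso p _ _
    have h2 : p • q • c 0 = p' • c 0 := by
      rw [smul_smul, hq, mul_inv_cancel_left]
    rw [h2] at h1
    rw [← h1, hc0]; exact hpp
  obtain ⟨f, hf0, hfd, hfiso⟩ := hgeo (c 0) (q • c 0)
  have hthin := hThin c (fun s => q • c s) f hc hray2 ⟨hf0, hfd, hfiso⟩ t ht0
  have key : ∃ s, 0 ≤ s ∧ dist (c t) (q • c s) ≤ 5 * δ := by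
    rcases hthin with ⟨s, hs, hle⟩ | ⟨s, ⟨hs0, hs1⟩, hle⟩
    · exact ⟨s, hs, hle⟩
    · -- boundary case: `f s` must be the endpoint `q • c 0`
      have hfs : dist (f 0) (f s) = |0 - s| := by
        apply hfiso 0 ⟨le_refl 0, dist_nonneg⟩ s ⟨hs0, hs1⟩
      rw [hf0] at hfs
      have hfs' : dist (c 0) (f s) = s := by
        rw [hfs]; rw [abs_of_nonpos (by linarith)]; ring
      have hct : dist (c t) (c 0) = t := by
        have := hc t ht0 0 (Set.mem_Ici.mpr le_rfl)
        rw [this, sub_zero, abs_of_nonneg ht0]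
      have htri : t ≤ 5 * δ + s := by
        calc t = dist (c t) (c 0) := hct.symm
          _ ≤ dist (c t) (f s) + dist (f s) (c 0) := dist_triangle _ _ _
          _ = dist (c t) (f s) + s := by rw [dist_comm (f s), hfs']
          _ ≤ 5 * δ + s := by linarith
      have hsD : s = dist (c 0) (q • c 0) := le_antisymm hs1 (by linarith)
      refine ⟨0, le_rfl, ?_⟩
      rw [hsD, hfd] at hle
      exact hle
  have hfin : dist (c t) (q • c t) ≤ D := hDft c hc q t ht0 key
  have h1 : dist (p • c t) (p • q • c t) = dist (c t) (q • c t) := hiso p _ _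
  have h2 : p • q • c t = p' • c t := by
    rw [smul_smul, hq, mul_inv_cancel_left]
  rw [h2] at h1
  rw [h1]; exact hfin
end

section
/- Let Y be a δ-hyperbolic horoball with bounded parabolic action by P and let D be the synchronous fellow-traveling constant. There is a constant F = 4 + 20δ + D, independent of basepoint, such that for any geodesic ray c based at y₀ tending to the boundary point and any p, p' ∈ P, if t₀ is the minimum value with d(pc(t₀), p'c(t₀)) ≤ D, then |d(p(y₀), p'(y₀)) − 2t₀| ≤ F. -/
open Metric Set

/-- With `t₀` the minimal time at which the rays `p c` and `p' c` come `D`-close,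
`d(p y₀, p' y₀)` equals `2 t₀` up to the additive error `F = 4 + 20δ + D`. -/
theorem stmt_18 {Y P : Type*} [MetricSpace Y] [ProperSpace Y] [Group P] [MulAction P Y]
    (δ D : ℝ) (hδ : 0 ≤ δ) (hD : 0 ≤ D)
    (hgeo : GeodesicSpace Y)
    (hiso : ∀ (p : P) (a b : Y), dist (p • a) (p • b) = dist a b)
    -- the Gromov boundary of `Y` is a single point: all rays are asymptotic
    (hone : ∀ c₁ c₂ : ℝ → Y, IsGeodesicRay c₁ → IsGeodesicRay c₂ → AsympRays c₁ c₂)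
    (c : ℝ → Y)
    -- the action is bounded parabolic with respect to the ray `c`:
    (hbp : ∃ K : ℝ, ∀ y : Y, ∃ (p : P) (t : ℝ), 0 ≤ t ∧ dist y (p • c t) ≤ K)
    -- ideal triangles are 5δ-thin:
    (hThin : ∀ (c₁ c₂ f : ℝ → Y), IsGeodesicRay c₁ → IsGeodesicRay c₂ →
      IsGeodesicSeg f (c₁ 0) (c₂ 0) → ∀ t, 0 ≤ t →
        (∃ s, 0 ≤ s ∧ dist (c₁ t) (c₂ s) ≤ 5 * δ) ∨
        (∃ s ∈ Set.Icc (0:ℝ) (dist (c₁ 0) (c₂ 0)), dist (c₁ t) (f s) ≤ 5 * δ))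
    -- `D` is the asynchronous-to-synchronous fellow-traveling constant:
    (hDft : ∀ c' : ℝ → Y, IsGeodesicRay c' → ∀ (p : P) (t : ℝ), 0 ≤ t →
      (∃ s, 0 ≤ s ∧ dist (c' t) (p • c' s) ≤ 5 * δ) → dist (c' t) (p • c' t) ≤ D)
    (hc : IsGeodesicRay c) (y₀ : Y) (hc0 : c 0 = y₀)
    (p p' : P) (t₀ : ℝ)
    (ht₀ : IsLeast {t : ℝ | 0 ≤ t ∧ dist (p • c t) (p' • c t) ≤ D} t₀) :
    |dist (p • y₀) (p' • y₀) - 2 * t₀| ≤ 4 + 20 * δ + D := by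
  obtain ⟨⟨ht₀0, ht₀D⟩, ht₀min⟩ := ht₀
  have key : ∀ (a b : P) (x y : Y), dist (a • x) (b • y) = dist x ((a⁻¹ * b) • y) := by
    intro a b x y
    rw [← hiso a⁻¹ (a • x) (b • y), ← mul_smul, ← mul_smul, inv_mul_cancel, one_smul]
  set c₁ : ℝ → Y := fun t => p • c t with hc₁def
  set c₂ : ℝ → Y := fun t => p' • c t with hc₂def
  have hc₁ : IsGeodesicRay c₁ := by
    intro s hs t ht
    simp only [hc₁def]
    rw [hiso]; exact hc s hs t ht
  have hc₂ : IsGeodesicRay c₂ := by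
    intro s hs t ht
    simp only [hc₂def]
    rw [hiso]; exact hc s hs t ht
  have h10 : c₁ 0 = p • y₀ := by simp [hc₁def, hc0]
  have h20 : c₂ 0 = p' • y₀ := by simp [hc₂def, hc0]
  set d := dist (p • y₀) (p' • y₀) with hddef
  have hdd : dist (c₁ 0) (c₂ 0) = d := by rw [h10, h20]
  have hdnn : 0 ≤ d := dist_nonneg
  have hray1 : ∀ t : ℝ, 0 ≤ t → dist (c₁ 0) (c₁ t) = t := by
    intro t ht
    rw [hc₁ 0 Set.self_mem_Ici t ht, zero_sub, abs_neg, abs_of_nonneg ht]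
  have hray2 : ∀ t : ℝ, 0 ≤ t → dist (c₂ 0) (c₂ t) = t := by
    intro t ht
    rw [hc₂ 0 Set.self_mem_Ici t ht, zero_sub, abs_neg, abs_of_nonneg ht]
  -- upper bound : d ≤ 2 t₀ + D
  have hub : d - 2 * t₀ ≤ D := by
    have h1 : dist (c₁ 0) (c₁ t₀) = t₀ := hray1 t₀ ht₀0
    have h2 : dist (c₂ t₀) (c₂ 0) = t₀ := by rw [dist_comm]; exact hray2 t₀ ht₀0
    have hmid : dist (c₁ t₀) (c₂ t₀) ≤ D := ht₀D
    have h4 := dist_triangle4 (c₁ 0) (c₁ t₀) (c₂ t₀) (c₂ 0)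
    rw [hdd] at h4
    linarith
  -- refuters : if a ray point is 5δ-close to the other ray, synchronous distance ≤ D
  have href1 : ∀ t : ℝ, 0 ≤ t → (∃ s, 0 ≤ s ∧ dist (c₁ t) (c₂ s) ≤ 5 * δ) →
      dist (c₁ t) (c₂ t) ≤ D := by
    rintro t ht ⟨s, hs, hcl⟩
    have h5 : dist (c t) ((p⁻¹ * p') • c s) ≤ 5 * δ := by rw [← key]; exact hcl
    have h6 := hDft c hc (p⁻¹ * p') t ht ⟨s, hs, h5⟩
    show dist (p • c t) (p' • c t) ≤ D
    rw [key]; exact h6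
  have href2 : ∀ t : ℝ, 0 ≤ t → (∃ s, 0 ≤ s ∧ dist (c₂ t) (c₁ s) ≤ 5 * δ) →
      dist (c₁ t) (c₂ t) ≤ D := by
    rintro t ht ⟨s, hs, hcl⟩
    have h5 : dist (c t) ((p'⁻¹ * p) • c s) ≤ 5 * δ := by rw [← key]; exact hcl
    have h6 := hDft c hc (p'⁻¹ * p) t ht ⟨s, hs, h5⟩
    show dist (p • c t) (p' • c t) ≤ D
    rw [dist_comm, key]; exact h6
  -- lower bound : 2 t₀ ≤ d + 20 δ + D
  have hlb : 2 * t₀ - d ≤ 20 * δ + D := by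
    refine le_of_forall_pos_le_add ?_
    intro ε hε
    obtain ⟨t, htdef⟩ : ∃ t, t = t₀ - ε / 4 := ⟨_, rfl⟩
    by_cases hts : 0 ≤ t
    · have htlt : t < t₀ := by linarith
      have hgt : ¬ dist (c₁ t) (c₂ t) ≤ D := by
        intro h
        have : t₀ ≤ t := ht₀min ⟨hts, h⟩
        linarith
      obtain ⟨f, hf⟩ := hgeo (c₁ 0) (c₂ 0)
      rcases hThin c₁ c₂ f hc₁ hc₂ hf t hts with h1 | ⟨s₁, hs₁mem, hs₁⟩
      · exact absurd (href1 t hts h1) hgt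
      rw [hdd] at hs₁mem
      obtain ⟨hf0, hfd, hfdist⟩ := hf
      rw [hdd] at hfd
      have hfdist' : ∀ s ∈ Set.Icc (0:ℝ) d, ∀ u ∈ Set.Icc (0:ℝ) d,
          dist (f s) (f u) = |s - u| := by rw [← hdd]; exact hfdist
      -- reversed geodesic
      have hf' : IsGeodesicSeg (fun s => f (d - s)) (c₂ 0) (c₁ 0) := by
        have hdd' : dist (c₂ 0) (c₁ 0) = d := by rw [dist_comm]; exact hdd
        refine ⟨by simpa using hfd, ?_, ?_⟩
        · rw [hdd']; simpa using hf0
        · intro s hs u hu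
          rw [hdd'] at hs hu
          have := hfdist' (d - s) ⟨by linarith [hs.2], by linarith [hs.1]⟩
            (d - u) ⟨by linarith [hu.2], by linarith [hu.1]⟩
          rw [this]
          rw [show d - s - (d - u) = -(s - u) by ring, abs_neg]
      rcases hThin c₂ c₁ (fun s => f (d - s)) hc₂ hc₁ hf' t hts with h1 | ⟨s₂', hs₂mem, hs₂⟩
      · exact absurd (href2 t hts h1) hgt
      rw [dist_comm, hdd] at hs₂mem
      set s₂ := d - s₂' with hs₂def
      have hs₂mem' : s₂ ∈ Set.Icc (0:ℝ) d :=
        ⟨by simp only [hs₂def]; linarith [hs₂mem.2], by simp only [hs₂def]; linarith [hs₂mem.1]⟩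
      have hs₂' : dist (c₂ t) (f s₂) ≤ 5 * δ := hs₂
      -- distances along f
      have hfs₁ : dist (c₁ 0) (f s₁) = s₁ := by
        rw [← hf0, hfdist' 0 ⟨le_rfl, hdnn⟩ s₁ hs₁mem, zero_sub, abs_neg,
          abs_of_nonneg hs₁mem.1]
      have hfs₂ : dist (c₂ 0) (f s₂) = d - s₂ := by
        rw [← hfd, hfdist' d ⟨hdnn, le_rfl⟩ s₂ hs₂mem',
          abs_of_nonneg (by linarith [hs₂mem'.2])]
      have hfs₁₂ : dist (f s₁) (f s₂) = |s₁ - s₂| := hfdist' s₁ hs₁mem s₂ hs₂mem'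
      -- inequalities
      have hA : t ≤ s₁ + 5 * δ := by
        have h := dist_triangle (c₁ 0) (f s₁) (c₁ t)
        rw [hray1 t hts] at h
        rw [dist_comm (f s₁) (c₁ t)] at h
        linarith
      have hB : t ≤ (d - s₂) + 5 * δ := by
        have h := dist_triangle (c₂ 0) (f s₂) (c₂ t)
        rw [hray2 t hts] at h
        rw [dist_comm (f s₂) (c₂ t)] at h
        linarith
      have hF : dist (c₁ t) (c₂ t) ≤ D + ε / 2 := by
        have h := dist_triangle4 (c₁ t) (c₁ t₀) (c₂ t₀) (c₂ t)
        have e1 : dist (c₁ t) (c₁ t₀) = ε / 4 := by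
          rw [hc₁ t hts t₀ ht₀0, abs_of_nonpos (by linarith)]; linarith
        have e2 : dist (c₂ t₀) (c₂ t) = ε / 4 := by
          rw [hc₂ t₀ ht₀0 t hts, abs_of_nonneg (by linarith)]; linarith
        have hmid : dist (c₁ t₀) (c₂ t₀) ≤ D := ht₀D
        linarith
      have hE := dist_triangle4 (f s₁) (c₁ t) (c₂ t) (f s₂)
      rw [dist_comm (f s₁) (c₁ t)] at hE
      have habs : s₁ - s₂ ≤ |s₁ - s₂| := le_abs_self _
      -- combine
      have : 2 * t - d ≤ 20 * δ + D + ε / 2 := by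
        have : s₁ - s₂ ≤ 10 * δ + D + ε / 2 := by rw [← hfs₁₂] at habs; linarith
        linarith
      linarith
    · push_neg at hts
      linarith
  rw [hddef] at hub hlb ⊢
  rw [abs_le]
  constructor <;> linarith
end

section
/- Let X be a proper δ-hyperbolic geodesic space that is visual with constant C and basepoint w, and suppose |∂X| ≥ 2. Then X is taut: there exists C' < ∞ such that for every point x ∈ X ∪ ∂X and every y ∈ X there is a geodesic (segment, ray, or line) emanating from x passing within distance C' of y. -/
open Metric Set Filter Topology

section aux
variable {X : Type*} [MetricSpace X]

lemma seg_dist0 {f : ℝ → X} {x y : X} (h : IsGeodesicSeg f x y) {s : ℝ}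
    (hs : s ∈ Icc 0 (dist x y)) : dist x (f s) = s := by
  have h0 : (0:ℝ) ∈ Icc 0 (dist x y) := ⟨le_rfl, dist_nonneg⟩
  have := h.2.2 0 h0 s hs
  rw [h.1] at this
  rwa [zero_sub, abs_neg, abs_of_nonneg hs.1] at this

lemma ray_dist0 {c : ℝ → X} (h : IsGeodesicRay c) {t : ℝ} (ht : 0 ≤ t) :
    dist (c 0) (c t) = t := by
  have := h 0 self_mem_Ici t (mem_Ici.mpr ht)
  rwa [zero_sub, abs_neg, abs_of_nonneg ht] at this

lemma ray_seg {c : ℝ → X} (h : IsGeodesicRay c) {n : ℝ} (hn : 0 ≤ n) :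
    IsGeodesicSeg c (c 0) (c n) := by
  have hd : dist (c 0) (c n) = n := ray_dist0 h hn
  refine ⟨rfl, by rw [hd], ?_⟩
  rw [hd]
  intro s hs t ht
  exact h s (mem_Ici.mpr hs.1) t (mem_Ici.mpr ht.1)

lemma seg_rev {f : ℝ → X} {x y : X} (h : IsGeodesicSeg f x y) :
    IsGeodesicSeg (fun t => f (dist x y - t)) y x := by
  have hc : dist y x = dist x y := dist_comm y x
  refine ⟨by simpa using h.2.1, ?_, ?_⟩
  · rw [hc]; simpa using h.1
  · rw [hc]
    intro s hs t ht
    have h1 : dist x y - s ∈ Icc 0 (dist x y) := ⟨by linarith [hs.2], by linarith [hs.1]⟩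
    have h2 : dist x y - t ∈ Icc 0 (dist x y) := ⟨by linarith [ht.2], by linarith [ht.1]⟩
    rw [h.2.2 _ h1 _ h2]
    rw [show dist x y - s - (dist x y - t) = t - s by ring, abs_sub_comm]

/-- limit along an ultrafilter of points in a compact set -/
lemma ucompact_limit {Y : Type*} [TopologicalSpace Y] (u : Ultrafilter ℕ) {s : Set Y}
    (hs : IsCompact s) (g : ℕ → Y) (hg : ∀ n, g n ∈ s) :
    ∃ a ∈ s, Filter.Tendsto g ↑u (𝓝 a) := by
  obtain ⟨a, has, h⟩ := hs.ultrafilter_le_nhds (u.map g)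
    (by rw [Ultrafilter.coe_map, Filter.le_principal_iff]
        exact Filter.mem_map.mpr (Filter.univ_mem' hg))
  exact ⟨a, has, by rwa [Ultrafilter.coe_map] at h⟩

/-- The master transfer lemma. -/
lemma transfer {X : Type*} [MetricSpace X] (u : Ultrafilter ℕ) {M B : ℝ} (hM : 0 ≤ M)
    (g : ℕ → ℝ → X) (D : ℕ → ℝ)
    (hg : ∀ᶠ n in ↑u, (∀ σ ∈ Icc (0:ℝ) (D n), ∀ τ ∈ Icc (0:ℝ) (D n),
        dist (g n σ) (g n τ) = |σ - τ|) ∧ M ≤ D n)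
    (q : ℝ → X) (hq : ∀ τ ∈ Icc (0:ℝ) M, Tendsto (fun n => g n (min τ (D n))) ↑u (𝓝 (q τ)))
    (p : ℕ → X) (pL : X) (hp : Tendsto p ↑u (𝓝 pL))
    (s : ℕ → ℝ) (hs : ∀ᶠ n in ↑u, s n ∈ Icc 0 M ∧ dist (p n) (g n (s n)) ≤ B) :
    ∃ sstar ∈ Icc (0:ℝ) M, dist pL (q sstar) ≤ B := by
  set sh : ℕ → ℝ := fun n => max 0 (min (s n) M) with hsh
  have hshmem : ∀ n, sh n ∈ Icc (0:ℝ) M := fun n =>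
    ⟨le_max_left _ _, max_le hM (min_le_right _ _)⟩
  obtain ⟨sstar, hsstarmem, hsstart⟩ := ucompact_limit u isCompact_Icc sh hshmem
  refine ⟨sstar, hsstarmem, ?_⟩
  have habs : Tendsto (fun n => B + |sh n - sstar|) ↑u (𝓝 (B + 0)) := by
    refine tendsto_const_nhds.add ?_
    have := hsstart.sub (tendsto_const_nhds (x := sstar))
    simpa using this.abs
  have hdist : Tendsto (fun n => dist (p n) (g n (min sstar (D n)))) ↑u (𝓝 (dist pL (q sstar))) :=
    hp.dist (hq sstar hsstarmem)
  have hle : ∀ᶠ n in ↑u, dist (p n) (g n (min sstar (D n))) ≤ B + |sh n - sstar| := by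
    filter_upwards [hg, hs] with n hgn hsn
    have hseq : sh n = s n := by
      rw [hsh]
      simp only []
      rw [min_eq_left hsn.1.2, max_eq_right hsn.1.1]
    have hmins : min sstar (D n) = sstar := min_eq_left (le_trans hsstarmem.2 hgn.2)
    rw [hmins]
    have hsnD : s n ∈ Icc (0:ℝ) (D n) := ⟨hsn.1.1, le_trans hsn.1.2 hgn.2⟩
    have hsstarD : sstar ∈ Icc (0:ℝ) (D n) := ⟨hsstarmem.1, le_trans hsstarmem.2 hgn.2⟩
    calc dist (p n) (g n sstar) ≤ dist (p n) (g n (s n)) + dist (g n (s n)) (g n sstar) :=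
          dist_triangle _ _ _
      _ ≤ B + |sh n - sstar| := by
          rw [hgn.1 _ hsnD _ hsstarD, hseq]
          exact add_le_add_left hsn.2 _
  have := le_of_tendsto_of_tendsto hdist habs hle
  simpa using this

end aux

section lim
variable {X : Type*} [MetricSpace X] [ProperSpace X]

lemma limit_ray (u : Ultrafilter ℕ) (hu : ↑u ≤ (Filter.atTop : Filter ℕ))
    (x : X) (y : ℕ → X) (f : ℕ → ℝ → X) (hf : ∀ n, IsGeodesicSeg (f n) x (y n))
    (hd : Tendsto (fun n => dist x (y n)) atTop atTop) :
    ∃ c : ℝ → X, IsGeodesicRay c ∧ c 0 = x ∧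
      ∀ t : ℝ, 0 ≤ t → Tendsto (fun n => f n (min t (dist x (y n)))) ↑u (𝓝 (c t)) := by
  set D : ℕ → ℝ := fun n => dist x (y n) with hD
  have hmem : ∀ t : ℝ, 0 ≤ t → ∀ n, f n (min t (D n)) ∈ closedBall x t := by
    intro t ht n
    have h1 : min t (D n) ∈ Icc (0:ℝ) (D n) := ⟨le_min ht dist_nonneg, min_le_right _ _⟩
    have := seg_dist0 (hf n) h1
    rw [mem_closedBall, dist_comm, this]
    exact min_le_left _ _
  have H : ∀ t : ℝ, 0 ≤ t → ∃ a : X, Tendsto (fun n => f n (min t (D n))) ↑u (𝓝 a) := by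
    intro t ht
    obtain ⟨a, _, ha⟩ := ucompact_limit u (isCompact_closedBall x t) _ (hmem t ht)
    exact ⟨a, ha⟩
  set c : ℝ → X := fun t => if ht : 0 ≤ t then (H t ht).choose else x with hc
  have hct : ∀ t : ℝ, 0 ≤ t → Tendsto (fun n => f n (min t (D n))) ↑u (𝓝 (c t)) := by
    intro t ht
    rw [hc]
    simp only [dif_pos ht]
    exact (H t ht).choose_spec
  have hray : ∀ s ∈ Ici (0:ℝ), ∀ t ∈ Ici (0:ℝ), dist (c s) (c t) = |s - t| := by
    intro s hs t ht
    rw [mem_Ici] at hs ht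
    have hev : ∀ᶠ n in ↑u, dist (f n (min s (D n))) (f n (min t (D n))) = |s - t| := by
      have hDlarge : ∀ᶠ n in atTop, max s t ≤ D n := hd.eventually_ge_atTop _
      filter_upwards [hu hDlarge] with n hn
      have hsD : s ≤ D n := le_trans (le_max_left _ _) hn
      have htD : t ≤ D n := le_trans (le_max_right _ _) hn
      rw [min_eq_left hsD, min_eq_left htD]
      exact (hf n).2.2 s ⟨hs, hsD⟩ t ⟨ht, htD⟩
    have h1 : Tendsto (fun n => dist (f n (min s (D n))) (f n (min t (D n)))) ↑u
        (𝓝 (dist (c s) (c t))) := (hct s hs).dist (hct t ht)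
    have h2 : Tendsto (fun n => dist (f n (min s (D n))) (f n (min t (D n)))) ↑u
        (𝓝 (|s - t|)) := Tendsto.congr' (hev.mono fun n h => h.symm) tendsto_const_nhds
    exact tendsto_nhds_unique h1 h2
  have hc0 : c 0 = x := by
    have h1 := hct 0 le_rfl
    have h2 : Tendsto (fun n => f n (min 0 (D n))) ↑u (𝓝 x) := by
      have : ∀ n, f n (min 0 (D n)) = x := by
        intro n
        rw [min_eq_left dist_nonneg, (hf n).1]
      rw [funext this]
      exact tendsto_const_nhds
    exact tendsto_nhds_unique h1 h2
  exact ⟨c, hray, hc0, hct⟩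

end lim

section tow
variable {X : Type*} [MetricSpace X] [ProperSpace X]

lemma dist_to_ray_top {x : X} {c₀ : ℝ → X} (hc₀ : IsGeodesicRay c₀) :
    Tendsto (fun n : ℕ => dist x (c₀ n)) atTop atTop := by
  have hle : ∀ n : ℕ, (n:ℝ) - dist (c₀ 0) x ≤ dist x (c₀ n) := by
    intro n
    have h1 : dist (c₀ 0) (c₀ n) = (n:ℝ) := ray_dist0 hc₀ (Nat.cast_nonneg n)
    have := dist_triangle (c₀ 0) x (c₀ n)
    rw [h1] at this
    linarith
  exact tendsto_atTop_mono hle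
    (tendsto_atTop_add_const_right _ _ tendsto_natCast_atTop_atTop)

lemma ray_toward {δ : ℝ} (hδ : 0 ≤ δ) (hgeo : GeodesicSpace X) (hthin : ThinTriangles X δ)
    (u : Ultrafilter ℕ) (hu : ↑u ≤ (Filter.atTop : Filter ℕ))
    (x : X) (c₀ : ℝ → X) (hc₀ : IsGeodesicRay c₀) :
    ∃ c : ℝ → X, IsGeodesicRay c ∧ c 0 = x ∧ AsympRays c c₀ := by
  set L : ℝ := dist x (c₀ 0) with hL
  set f : ℕ → ℝ → X := fun n => (hgeo x (c₀ n)).choose with hfdef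
  have hf : ∀ n, IsGeodesicSeg (f n) x (c₀ n) := fun n => (hgeo x (c₀ n)).choose_spec
  set D : ℕ → ℝ := fun n => dist x (c₀ n) with hD
  obtain ⟨c, hray, hc0, hct⟩ := limit_ray u hu x (fun n => c₀ n) f hf (dist_to_ray_top hc₀)
  refine ⟨c, hray, hc0, δ + L, ?_⟩
  intro t ht
  set M : ℝ := t + 2 * L + δ with hM
  have hM0 : 0 ≤ M := by
    have : (0:ℝ) ≤ L := dist_nonneg
    rw [hM]; linarith
  set B : ℝ := δ + L with hB
  obtain ⟨g₀, hg₀⟩ := hgeo x (c₀ 0)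
  -- the per-n thin-triangle estimate
  have hP : ∀ n : ℕ, ∃ σ : ℝ, σ ∈ Icc 0 M ∧ dist (f n (min t (D n))) (c₀ σ) ≤ B := by
    intro n
    have hn0 : (0:ℝ) ≤ (n:ℝ) := Nat.cast_nonneg n
    have hseg0n : IsGeodesicSeg c₀ (c₀ 0) (c₀ n) := ray_seg hc₀ hn0
    have hrev : IsGeodesicSeg (fun σ => c₀ (dist (c₀ 0) (c₀ n) - σ)) (c₀ n) (c₀ 0) :=
      seg_rev hseg0n
    have hpmem : f n (min t (D n)) ∈ f n '' Icc (0:ℝ) (dist x (c₀ n)) :=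
      ⟨min t (D n), ⟨le_min ht dist_nonneg, min_le_right _ _⟩, rfl⟩
    obtain ⟨q, hq, hdq⟩ := hthin x (c₀ n) (c₀ 0) (f n) _ g₀ (hf n) hrev hg₀ _ hpmem
    have hdistxp : dist x (f n (min t (D n))) ≤ t := by
      rw [seg_dist0 (hf n) ⟨le_min ht dist_nonneg, min_le_right _ _⟩]
      exact min_le_left _ _
    rcases hq with hq | hq
    · obtain ⟨σ, hσ, rfl⟩ := hq
      set σ' : ℝ := dist (c₀ 0) (c₀ n) - σ with hσ'
      have hσ'0 : 0 ≤ σ' := by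
        rw [hσ']
        rw [dist_comm (c₀ n) (c₀ 0)] at hσ
        linarith [hσ.2]
      have hσ'M : σ' ≤ M := by
        have h1 : dist (c₀ 0) (c₀ σ') = σ' := ray_dist0 hc₀ hσ'0
        have h2 := dist_triangle (c₀ 0) x (c₀ σ')
        have h3 := dist_triangle x (f n (min t (D n))) (c₀ σ')
        rw [h1] at h2
        rw [dist_comm (c₀ 0) x, ← hL] at h2
        have : (0:ℝ) ≤ L := dist_nonneg
        rw [hM]; linarith
      exact ⟨σ', ⟨hσ'0, hσ'M⟩, le_trans hdq (by rw [hB]; linarith [dist_nonneg (x := x) (y := c₀ 0)])⟩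
    · obtain ⟨σ, hσ, rfl⟩ := hq
      refine ⟨0, ⟨le_rfl, hM0⟩, ?_⟩
      have hqc0 : dist (g₀ σ) (c₀ 0) ≤ L := by
        have h1 : g₀ (dist x (c₀ 0)) = c₀ 0 := hg₀.2.1
        have := hg₀.2.2 σ hσ (dist x (c₀ 0)) ⟨dist_nonneg, le_rfl⟩
        rw [h1] at this
        rw [this, ← hL, abs_of_nonpos (by linarith [hσ.2])]
        linarith [hσ.1]
      calc dist (f n (min t (D n))) (c₀ 0)
          ≤ dist (f n (min t (D n))) (g₀ σ) + dist (g₀ σ) (c₀ 0) := dist_triangle _ _ _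
        _ ≤ B := by rw [hB]; linarith
  set s : ℕ → ℝ := fun n => (hP n).choose with hsdef
  have hsspec : ∀ n, s n ∈ Icc (0:ℝ) M ∧ dist (f n (min t (D n))) (c₀ (s n)) ≤ B :=
    fun n => (hP n).choose_spec
  have hgev : ∀ᶠ n in ↑u, (∀ σ ∈ Icc (0:ℝ) ((n:ℕ) : ℝ), ∀ τ ∈ Icc (0:ℝ) ((n:ℕ):ℝ),
      dist (c₀ σ) (c₀ τ) = |σ - τ|) ∧ M ≤ ((n:ℕ):ℝ) := by
    have h1 : ∀ᶠ n : ℕ in atTop, M ≤ (n:ℝ) := by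
      obtain ⟨N, hN⟩ := exists_nat_ge M
      filter_upwards [eventually_ge_atTop N] with n hn
      exact le_trans hN (Nat.cast_le.mpr hn)
    filter_upwards [hu h1] with n hn
    exact ⟨fun σ hσ τ hτ => hc₀ σ (mem_Ici.mpr hσ.1) τ (mem_Ici.mpr hτ.1), hn⟩
  have hqten : ∀ τ ∈ Icc (0:ℝ) M, Tendsto (fun n : ℕ => c₀ (min τ (n:ℝ))) ↑u (𝓝 (c₀ τ)) := by
    intro τ hτ
    have h1 : ∀ᶠ n : ℕ in ↑u, c₀ (min τ (n:ℝ)) = c₀ τ := by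
      have h2 : ∀ᶠ n : ℕ in atTop, τ ≤ (n:ℝ) := by
        obtain ⟨N, hN⟩ := exists_nat_ge τ
        filter_upwards [eventually_ge_atTop N] with n hn
        exact le_trans hN (Nat.cast_le.mpr hn)
      filter_upwards [hu h2] with n hn
      rw [min_eq_left hn]
    exact Tendsto.congr' (h1.mono fun n h => h.symm) tendsto_const_nhds
  obtain ⟨sstar, hsmem, hsd⟩ := transfer u hM0 (fun n _ => c₀ _) (fun n => (n:ℝ)) hgev c₀
    hqten (fun n => f n (min t (D n))) (c t) (hct t ht) s
    (Filter.Eventually.of_forall hsspec)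
  exact ⟨sstar, hsmem.1, hsd⟩

end tow

section rest
variable {X : Type*} [MetricSpace X] [ProperSpace X]

set_option linter.unusedSectionVars false

lemma transfer_ray (u : Ultrafilter ℕ) (hu : ↑u ≤ (Filter.atTop : Filter ℕ))
    (x y : X) (Y : ℕ → X) (f : ℕ → ℝ → X) (hf : ∀ n, IsGeodesicSeg (f n) x (Y n))
    (hd : Tendsto (fun n => dist x (Y n)) atTop atTop)
    (ρ : ℝ → X) (hρt : ∀ t : ℝ, 0 ≤ t → Tendsto (fun n => f n (min t (dist x (Y n)))) ↑u (𝓝 (ρ t)))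
    (B : ℝ)
    (hA : ∀ᶠ n in ↑u, ∃ σ ∈ Icc (0:ℝ) (dist x (Y n)), dist y (f n σ) ≤ B) :
    ∃ t, 0 ≤ t ∧ dist y (ρ t) ≤ B := by
  classical
  have hB0 : 0 ≤ B := by
    obtain ⟨n, σ, _, hσ⟩ := hA.exists
    exact le_trans dist_nonneg hσ
  set M : ℝ := dist x y + B with hM
  have hM0 : 0 ≤ M := by have := dist_nonneg (x := x) (y := y); rw [hM]; linarith
  set s : ℕ → ℝ := fun n =>
    if h : ∃ σ ∈ Icc (0:ℝ) (dist x (Y n)), dist y (f n σ) ≤ B then h.choose else 0 with hsdef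
  have hs : ∀ᶠ n in ↑u, s n ∈ Icc (0:ℝ) M ∧ dist y (f n (s n)) ≤ B := by
    filter_upwards [hA] with n hn
    rw [hsdef]
    simp only [dif_pos hn]
    obtain ⟨hmem, hdist⟩ := hn.choose_spec
    refine ⟨⟨hmem.1, ?_⟩, hdist⟩
    have h1 : dist x (f n hn.choose) = hn.choose := seg_dist0 (hf n) hmem
    have h2 := dist_triangle x y (f n hn.choose)
    rw [h1] at h2
    rw [hM]
    linarith [hdist, dist_triangle x y (f n hn.choose)]
  have hg : ∀ᶠ n in ↑u, (∀ σ ∈ Icc (0:ℝ) (dist x (Y n)), ∀ τ ∈ Icc (0:ℝ) (dist x (Y n)),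
      dist (f n σ) (f n τ) = |σ - τ|) ∧ M ≤ dist x (Y n) := by
    filter_upwards [hu (hd.eventually_ge_atTop M)] with n hn
    exact ⟨(hf n).2.2, hn⟩
  obtain ⟨sstar, hsmem, hsd⟩ := transfer u hM0 f (fun n => dist x (Y n)) hg ρ
    (fun τ hτ => hρt τ hτ.1) (fun _ => y) y tendsto_const_nhds s hs
  exact ⟨sstar, hsmem.1, hsd⟩

lemma asymp_symm {a b : ℝ → X} (ha : IsGeodesicRay a) (hb : IsGeodesicRay b)
    (h : AsympRays a b) : AsympRays b a := by
  obtain ⟨K, hK⟩ := h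
  refine ⟨dist (a 0) (b 0) + 2 * K, fun t ht => ⟨t, ht, ?_⟩⟩
  obtain ⟨σ, hσ0, hσ⟩ := hK t ht
  have h1 : dist (a 0) (a t) = t := ray_dist0 ha ht
  have h2 : dist (b 0) (b σ) = σ := ray_dist0 hb hσ0
  have hbt : dist (b t) (b σ) = |t - σ| := hb t (mem_Ici.mpr ht) σ (mem_Ici.mpr hσ0)
  have habs : |t - σ| ≤ dist (a 0) (b 0) + K := by
    rw [abs_sub_le_iff]
    constructor
    · have t4 := dist_triangle4 (a 0) (b 0) (b σ) (a t)
      rw [h1, h2, dist_comm (b σ) (a t)] at t4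
      linarith
    · have t4 := dist_triangle4 (b 0) (a 0) (a t) (b σ)
      rw [h1, h2, dist_comm (b 0) (a 0)] at t4
      linarith
  have tfin := dist_triangle (b t) (b σ) (a t)
  rw [hbt, dist_comm (b σ) (a t)] at tfin
  linarith

lemma asymp_trans {a b c : ℝ → X} (h₁ : AsympRays a b) (h₂ : AsympRays b c) :
    AsympRays a c := by
  obtain ⟨K₁, hK₁⟩ := h₁
  obtain ⟨K₂, hK₂⟩ := h₂
  refine ⟨K₁ + K₂, fun t ht => ?_⟩
  obtain ⟨σ, hσ0, hσ⟩ := hK₁ t ht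
  obtain ⟨τ, hτ0, hτ⟩ := hK₂ σ hσ0
  exact ⟨τ, hτ0, le_trans (dist_triangle _ (b σ) _) (add_le_add hσ hτ)⟩

end rest

section divg
variable {X : Type*} [MetricSpace X] [ProperSpace X]

set_option linter.unusedSectionVars false

lemma fellow_travel {δ : ℝ} (hδ : 0 ≤ δ) (hgeo : GeodesicSpace X)
    (hthin : ThinTriangles X δ) {γ₁ γ₂ : ℝ → X} (h₁ : IsGeodesicRay γ₁)
    (h₂ : IsGeodesicRay γ₂) (hw : γ₁ 0 = γ₂ 0) {T t : ℝ} (ht : 0 ≤ t) (htT : t ≤ T)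
    (hd4 : dist (γ₁ T) (γ₂ T) ≤ 4 * δ) : dist (γ₁ t) (γ₂ t) ≤ 10 * δ := by
  have hT : 0 ≤ T := le_trans ht htT
  obtain ⟨h, hh⟩ := hgeo (γ₁ T) (γ₂ T)
  have hseg1 : IsGeodesicSeg γ₁ (γ₁ 0) (γ₁ T) := ray_seg h₁ hT
  have hseg2 : IsGeodesicSeg γ₂ (γ₁ 0) (γ₂ T) := by rw [hw]; exact ray_seg h₂ hT
  have hd1 : dist (γ₁ 0) (γ₁ T) = T := ray_dist0 h₁ hT
  have hd2 : dist (γ₁ 0) (γ₂ T) = T := by rw [hw]; exact ray_dist0 h₂ hT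
  have hpmem : γ₁ t ∈ γ₁ '' Icc (0:ℝ) (dist (γ₁ 0) (γ₁ T)) :=
    ⟨t, ⟨ht, by rw [hd1]; exact htT⟩, rfl⟩
  obtain ⟨q, hq, hdq⟩ := hthin (γ₁ 0) (γ₁ T) (γ₂ T) γ₁ h γ₂ hseg1 hh hseg2 _ hpmem
  rcases hq with hq | hq
  · -- q on the short side [γ₁ T, γ₂ T]
    obtain ⟨σ, hσ, rfl⟩ := hq
    have hq2 : dist (h σ) (γ₂ T) ≤ 4 * δ := by
      have he : h (dist (γ₁ T) (γ₂ T)) = γ₂ T := hh.2.1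
      have := hh.2.2 σ hσ (dist (γ₁ T) (γ₂ T)) ⟨dist_nonneg, le_rfl⟩
      rw [he] at this
      rw [this, abs_of_nonpos (by linarith [hσ.2])]
      linarith [hσ.1, hd4]
    have h5 : dist (γ₁ t) (γ₂ T) ≤ 5 * δ :=
      le_trans (dist_triangle _ (h σ) _) (by linarith)
    have hTt : T - t ≤ 5 * δ := by
      have := dist_triangle (γ₁ 0) (γ₁ t) (γ₂ T)
      rw [hd2, ray_dist0 h₁ ht] at this
      linarith
    have hlast : dist (γ₂ T) (γ₂ t) = T - t := by
      have := h₂ T (mem_Ici.mpr hT) t (mem_Ici.mpr ht)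
      rw [this, abs_of_nonneg (by linarith)]
    have := dist_triangle (γ₁ t) (γ₂ T) (γ₂ t)
    rw [hlast] at this
    linarith
  · -- q on [γ₁ 0, γ₂ T] = γ₂
    obtain ⟨σ, hσ, rfl⟩ := hq
    have hσ0 : 0 ≤ σ := hσ.1
    have habs : |σ - t| ≤ δ := by
      have h3 : dist (γ₂ 0) (γ₂ σ) = σ := ray_dist0 h₂ hσ0
      have h4 : dist (γ₂ 0) (γ₁ t) = t := by rw [← hw]; exact ray_dist0 h₁ ht
      have := abs_dist_sub_le (γ₂ σ) (γ₁ t) (γ₂ 0)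
      rw [dist_comm (γ₂ σ) (γ₂ 0), dist_comm (γ₁ t) (γ₂ 0), h3, h4,
        dist_comm (γ₂ σ) (γ₁ t)] at this
      exact le_trans this hdq
    have h6 : dist (γ₂ σ) (γ₂ t) = |σ - t| := h₂ σ (mem_Ici.mpr hσ0) t (mem_Ici.mpr ht)
    have := dist_triangle (γ₁ t) (γ₂ σ) (γ₂ t)
    rw [h6] at this
    have habs' : |σ - t| ≤ δ := habs
    linarith [abs_nonneg (σ - t)]

lemma diverge {δ : ℝ} (hδ : 0 ≤ δ) (hgeo : GeodesicSpace X) (hthin : ThinTriangles X δ)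
    {γ₁ γ₂ : ℝ → X} (h₁ : IsGeodesicRay γ₁) (h₂ : IsGeodesicRay γ₂) (hw : γ₁ 0 = γ₂ 0)
    (hna : ¬ AsympRays γ₁ γ₂) :
    ∃ K : ℝ, 0 ≤ K ∧ ∀ T : ℝ, K ≤ T → 4 * δ < dist (γ₁ T) (γ₂ T) := by
  by_contra hcon
  push_neg at hcon
  apply hna
  refine ⟨10 * δ, fun t ht => ⟨t, ht, ?_⟩⟩
  obtain ⟨T, hT, hdT⟩ := hcon t ht
  exact fellow_travel hδ hgeo hthin h₁ h₂ hw ht hT hdT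

end divg

/-- A visual proper δ-hyperbolic geodesic space with at least two boundary points is
taut: there is `C' < ∞` such that every `y ∈ X` lies within `C'` of a geodesic emanating
from any prescribed point of `X ∪ ∂X` (a ray from the point, when the point is in `X`;
a geodesic tending to the point, when the point is ideal). -/
theorem stmt_19 {X : Type*} [MetricSpace X] [ProperSpace X]
    (δ : ℝ) (hδ : 0 ≤ δ) (hgeo : GeodesicSpace X) (hthin : ThinTriangles X δ)
    (w : X) (C : ℝ)
    -- `X` is visual with basepoint `w` and constant `C`:
    (hvis : ∀ x : X, ∃ c : ℝ → X, IsGeodesicRay c ∧ c 0 = w ∧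
      ∃ t, 0 ≤ t ∧ dist x (c t) ≤ C)
    -- `∂X` has at least two points: there are two non-asymptotic geodesic rays
    (hbdry : ∃ c₁ c₂ : ℝ → X, IsGeodesicRay c₁ ∧ IsGeodesicRay c₂ ∧ ¬ AsympRays c₁ c₂) :
    ∃ C' : ℝ,
      (∀ x y : X, ∃ c : ℝ → X, IsGeodesicRay c ∧ c 0 = x ∧
        ∃ t, 0 ≤ t ∧ dist y (c t) ≤ C') ∧
      (∀ c₀ : ℝ → X, IsGeodesicRay c₀ → ∀ y : X, ∃ c : ℝ → X, IsGeodesicRay c ∧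
        AsympRays c c₀ ∧ ∃ t, 0 ≤ t ∧ dist y (c t) ≤ C') := by
  classical
  obtain ⟨c₁, c₂, hc₁, hc₂, hna⟩ := hbdry
  obtain ⟨u, hu⟩ := Filter.exists_ultrafilter_le (atTop : Filter ℕ)
  obtain ⟨γ₁, hγ₁, hγ₁0, hγ₁a⟩ := ray_toward hδ hgeo hthin u hu w c₁ hc₁
  obtain ⟨γ₂, hγ₂, hγ₂0, hγ₂a⟩ := ray_toward hδ hgeo hthin u hu w c₂ hc₂
  have hnaγ : ¬ AsympRays γ₁ γ₂ := fun h =>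
    hna (asymp_trans (asymp_trans (asymp_symm hγ₁ hc₁ hγ₁a) h) hγ₂a)
  have hwγ : γ₁ 0 = γ₂ 0 := by rw [hγ₁0, hγ₂0]
  obtain ⟨K, hK0, hKdiv⟩ := diverge hδ hgeo hthin hγ₁ hγ₂ hwγ hnaγ
  have hC0 : 0 ≤ C := by
    obtain ⟨c, _, _, t, _, hle⟩ := hvis w
    exact le_trans dist_nonneg hle
  have hcastev : ∀ r : ℝ, ∀ᶠ n : ℕ in ↑u, r ≤ (n:ℝ) := fun r =>
    hu (tendsto_natCast_atTop_atTop.eventually_ge_atTop r)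
  set C' : ℝ := C + 2 * K + 5 * δ with hC'
  have hC'0 : 0 ≤ C' := by rw [hC']; linarith
  have hdγ1 : ∀ r : ℝ, 0 ≤ r → dist w (γ₁ r) = r := fun r hr => by
    rw [← hγ₁0]; exact ray_dist0 hγ₁ hr
  have hdγ2 : ∀ r : ℝ, 0 ≤ r → dist w (γ₂ r) = r := fun r hr => by
    rw [← hγ₂0]; exact ray_dist0 hγ₂ hr
  have hsegγ1 : ∀ r : ℝ, 0 ≤ r → IsGeodesicSeg γ₁ w (γ₁ r) := fun r hr => by
    have := ray_seg hγ₁ hr; rwa [hγ₁0] at this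
  have hsegγ2 : ∀ r : ℝ, 0 ≤ r → IsGeodesicSeg γ₂ w (γ₂ r) := fun r hr => by
    have := ray_seg hγ₂ hr; rwa [hγ₂0] at this
  refine ⟨C', ?_, ?_⟩
  · -- PART 1 : rays from a point x passing near y
    intro x y
    obtain ⟨cv, hcv, hcv0, ty, hty0, htyC⟩ := hvis y
    set f0 : ℕ → ℝ → X := fun n => (hgeo x (cv n)).choose with hf0def
    have hf0 : ∀ n, IsGeodesicSeg (f0 n) x (cv n) := fun n => (hgeo x (cv n)).choose_spec
    obtain ⟨ρ0, hρ0ray, hρ00, hρ0t⟩ :=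
      limit_ray u hu x (fun n => cv n) f0 hf0 (dist_to_ray_top hcv)
    set f1 : ℕ → ℝ → X := fun n => (hgeo x (γ₁ n)).choose with hf1def
    have hf1 : ∀ n, IsGeodesicSeg (f1 n) x (γ₁ n) := fun n => (hgeo x (γ₁ n)).choose_spec
    obtain ⟨ρ1, hρ1ray, hρ10, hρ1t⟩ :=
      limit_ray u hu x (fun n => γ₁ n) f1 hf1 (dist_to_ray_top hγ₁)
    set f2 : ℕ → ℝ → X := fun n => (hgeo x (γ₂ n)).choose with hf2def
    have hf2 : ∀ n, IsGeodesicSeg (f2 n) x (γ₂ n) := fun n => (hgeo x (γ₂ n)).choose_spec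
    obtain ⟨ρ2, hρ2ray, hρ20, hρ2t⟩ :=
      limit_ray u hu x (fun n => γ₂ n) f2 hf2 (dist_to_ray_top hγ₂)
    obtain ⟨g, hg⟩ := hgeo w x
    set P0 : ℕ → Prop := fun n => ∃ σ ∈ Icc (0:ℝ) (dist x (cv n)), dist y (f0 n σ) ≤ C'
      with hP0def
    set P1 : ℕ → Prop := fun n => ∃ σ ∈ Icc (0:ℝ) (dist x (γ₁ n)), dist y (f1 n σ) ≤ C'
      with hP1def
    set P2 : ℕ → Prop := fun n => ∃ σ ∈ Icc (0:ℝ) (dist x (γ₂ n)), dist y (f2 n σ) ≤ C'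
      with hP2def
    by_cases hA0 : ∀ᶠ n in ↑u, P0 n
    · obtain ⟨t, ht0, htd⟩ := transfer_ray u hu x y (fun n => cv n) f0 hf0
        (dist_to_ray_top hcv) ρ0 hρ0t C' hA0
      exact ⟨ρ0, hρ0ray, hρ00, t, ht0, htd⟩
    · -- y is δ-close to the segment [w,x] (up to C)
      have claim1 : ∀ n : ℕ, ty ≤ (n:ℝ) →
          P0 n ∨ ∃ σ ∈ Icc (0:ℝ) (dist w x), dist y (g σ) ≤ C + δ := by
        intro n hn
        have hn0 : (0:ℝ) ≤ (n:ℝ) := le_trans hty0 hn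
        have hsegcv : IsGeodesicSeg cv w (cv n) := by
          have := ray_seg hcv hn0; rwa [hcv0] at this
        have hdw : dist w (cv n) = (n:ℝ) := by rw [← hcv0]; exact ray_dist0 hcv hn0
        have hpmem : cv ty ∈ cv '' Icc (0:ℝ) (dist w (cv n)) :=
          ⟨ty, ⟨hty0, by rw [hdw]; exact hn⟩, rfl⟩
        obtain ⟨q, hq, hdq⟩ := hthin w (cv n) x cv
          (fun σ => f0 n (dist x (cv n) - σ)) g hsegcv (seg_rev (hf0 n)) hg _ hpmem
        rcases hq with hq | hq
        · obtain ⟨σ, hσ, rfl⟩ := hq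
          left
          rw [hP0def]
          refine ⟨dist x (cv n) - σ, ⟨?_, ?_⟩, ?_⟩
          · rw [dist_comm (cv n) x] at hσ; linarith [hσ.2]
          · linarith [hσ.1]
          · calc dist y (f0 n (dist x (cv n) - σ))
                ≤ dist y (cv ty) + dist (cv ty) (f0 n (dist x (cv n) - σ)) :=
                  dist_triangle _ _ _
              _ ≤ C' := by rw [hC']; linarith
        · obtain ⟨σ, hσ, rfl⟩ := hq
          right
          exact ⟨σ, hσ, le_trans (dist_triangle y (cv ty) (g σ)) (by linarith)⟩
      have hnot0 : ∀ᶠ n in ↑u, ¬ P0 n := Ultrafilter.eventually_not.mpr hA0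
      obtain ⟨n₀, hn₀1, hn₀2⟩ := (hnot0.and (hcastev ty)).exists
      obtain ⟨σ₀, hσ₀, hyg⟩ := (claim1 n₀ hn₀2).resolve_left hn₀1
      -- the common "claim2" for the two reference rays
      have claim2 : ∀ (γ : ℝ → X), IsGeodesicRay γ → γ 0 = w →
          ∀ (f : ℕ → ℝ → X), (∀ n, IsGeodesicSeg (f n) x (γ n)) → ∀ n : ℕ,
          (∃ σ ∈ Icc (0:ℝ) (dist x (γ n)), dist y (f n σ) ≤ C') ∨
          (∃ τ, 0 ≤ τ ∧ dist (g σ₀) (γ τ) ≤ δ) := by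
        intro γ hγ hγ0 f hf n
        have hn0 : (0:ℝ) ≤ (n:ℝ) := Nat.cast_nonneg n
        have hsegγ : IsGeodesicSeg γ w (γ n) := by
          have := ray_seg hγ hn0; rwa [hγ0] at this
        have hpmem : g σ₀ ∈ g '' Icc (0:ℝ) (dist w x) := ⟨σ₀, hσ₀, rfl⟩
        obtain ⟨q, hq, hdq⟩ := hthin w x (γ n) g (f n) γ hg (hf n) hsegγ _ hpmem
        rcases hq with hq | hq
        · obtain ⟨σ, hσ, rfl⟩ := hq
          left
          refine ⟨σ, hσ, ?_⟩
          calc dist y (f n σ) ≤ dist y (g σ₀) + dist (g σ₀) (f n σ) := dist_triangle _ _ _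
            _ ≤ C' := by rw [hC']; linarith
        · obtain ⟨τ, hτ, rfl⟩ := hq
          exact Or.inr ⟨τ, hτ.1, hdq⟩
      by_cases hA1 : ∀ᶠ n in ↑u, P1 n
      · obtain ⟨t, ht0, htd⟩ := transfer_ray u hu x y (fun n => γ₁ n) f1 hf1
          (dist_to_ray_top hγ₁) ρ1 hρ1t C' hA1
        exact ⟨ρ1, hρ1ray, hρ10, t, ht0, htd⟩
      by_cases hA2 : ∀ᶠ n in ↑u, P2 n
      · obtain ⟨t, ht0, htd⟩ := transfer_ray u hu x y (fun n => γ₂ n) f2 hf2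
          (dist_to_ray_top hγ₂) ρ2 hρ2t C' hA2
        exact ⟨ρ2, hρ2ray, hρ20, t, ht0, htd⟩
      -- both fail : derive a contradiction
      exfalso
      have hnot1 : ∀ᶠ n in ↑u, ¬ P1 n := Ultrafilter.eventually_not.mpr hA1
      have hnot2 : ∀ᶠ n in ↑u, ¬ P2 n := Ultrafilter.eventually_not.mpr hA2
      obtain ⟨n₁, hn₁1, hn₁2⟩ := (hnot1.and hnot2).exists
      obtain ⟨τ₁, hτ₁0, hτ₁⟩ := (claim2 γ₁ hγ₁ hγ₁0 f1 hf1 n₁).resolve_left hn₁1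
      obtain ⟨τ₂, hτ₂0, hτ₂⟩ := (claim2 γ₂ hγ₂ hγ₂0 f2 hf2 n₁).resolve_left hn₁2
      have hd0 : dist w (g σ₀) = σ₀ := seg_dist0 hg hσ₀
      have habs1 : |τ₁ - σ₀| ≤ δ := by
        have := abs_dist_sub_le (γ₁ τ₁) (g σ₀) w
        rw [dist_comm (γ₁ τ₁) w, dist_comm (g σ₀) w, hdγ1 τ₁ hτ₁0, hd0,
          dist_comm (γ₁ τ₁) (g σ₀)] at this
        exact le_trans this hτ₁
      have habs2 : |τ₂ - σ₀| ≤ δ := by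
        have := abs_dist_sub_le (γ₂ τ₂) (g σ₀) w
        rw [dist_comm (γ₂ τ₂) w, dist_comm (g σ₀) w, hdγ2 τ₂ hτ₂0, hd0,
          dist_comm (γ₂ τ₂) (g σ₀)] at this
        exact le_trans this hτ₂
      have habs12 : |τ₂ - τ₁| ≤ 2 * δ := by
        have := abs_sub_le τ₂ σ₀ τ₁
        rw [abs_sub_comm σ₀ τ₁] at this
        linarith
      have hd22 : dist (γ₂ τ₂) (γ₂ τ₁) = |τ₂ - τ₁| :=
        hγ₂ τ₂ (mem_Ici.mpr hτ₂0) τ₁ (mem_Ici.mpr hτ₁0)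
      have hd12 : dist (γ₁ τ₁) (γ₂ τ₁) ≤ 4 * δ := by
        have h4 := dist_triangle4 (γ₁ τ₁) (g σ₀) (γ₂ τ₂) (γ₂ τ₁)
        rw [hd22, dist_comm (γ₁ τ₁) (g σ₀)] at h4
        linarith
      have hτ₁K : τ₁ < K := by
        by_contra hcon
        push_neg at hcon
        linarith [hKdiv τ₁ hcon]
      have hσ₀K : σ₀ ≤ K + δ := by
        have := abs_le.mp habs1
        linarith [this.1]
      have hyw : dist y w ≤ C + K + 2 * δ := by
        have h1 := dist_triangle y (g σ₀) w
        rw [dist_comm (g σ₀) w] at h1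
        linarith
      -- the segments [γ₁ n, γ₂ n] pass near w (at γ₁ K)
      set h12 : ℕ → ℝ → X := fun n => (hgeo (γ₁ n) (γ₂ n)).choose with hh12def
      have hh12 : ∀ n, IsGeodesicSeg (h12 n) (γ₁ n) (γ₂ n) :=
        fun n => (hgeo (γ₁ n) (γ₂ n)).choose_spec
      have claim3 : ∀ n : ℕ, K ≤ (n:ℝ) →
          ∃ τ ∈ Icc (0:ℝ) (dist (γ₁ n) (γ₂ n)), dist (γ₁ K) (h12 n τ) ≤ δ := by
        intro n hKn
        have hn0 : (0:ℝ) ≤ (n:ℝ) := Nat.cast_nonneg n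
        have hpmem : γ₁ K ∈ γ₁ '' Icc (0:ℝ) (dist w (γ₁ n)) :=
          ⟨K, ⟨hK0, by rw [hdγ1 _ hn0]; exact hKn⟩, rfl⟩
        obtain ⟨q, hq, hdq⟩ := hthin w (γ₁ n) (γ₂ n) γ₁ (h12 n) γ₂
          (hsegγ1 _ hn0) (hh12 n) (hsegγ2 _ hn0) _ hpmem
        rcases hq with hq | hq
        · obtain ⟨τ, hτ, rfl⟩ := hq
          exact ⟨τ, hτ, hdq⟩
        · exfalso
          obtain ⟨τ, hτ, rfl⟩ := hq
          have habs : |τ - K| ≤ δ := by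
            have := abs_dist_sub_le (γ₂ τ) (γ₁ K) w
            rw [dist_comm (γ₂ τ) w, dist_comm (γ₁ K) w, hdγ2 τ hτ.1, hdγ1 K hK0,
              dist_comm (γ₂ τ) (γ₁ K)] at this
            exact le_trans this hdq
          have h2K : dist (γ₁ K) (γ₂ K) ≤ 2 * δ := by
            have h1 := dist_triangle (γ₁ K) (γ₂ τ) (γ₂ K)
            have h2 : dist (γ₂ τ) (γ₂ K) = |τ - K| :=
              hγ₂ τ (mem_Ici.mpr hτ.1) K (mem_Ici.mpr hK0)
            rw [h2] at h1
            linarith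
          linarith [hKdiv K le_rfl]
      have claim4 : ∀ n : ℕ, K ≤ (n:ℝ) → P1 n ∨ P2 n := by
        intro n hKn
        obtain ⟨τ, hτ, hdτ⟩ := claim3 n hKn
        have hm : dist w (h12 n τ) ≤ K + δ := by
          have h1 := dist_triangle w (γ₁ K) (h12 n τ)
          rw [hdγ1 K hK0] at h1
          linarith
        have hym : dist y (h12 n τ) ≤ C + 2 * K + 3 * δ := by
          have h1 := dist_triangle y w (h12 n τ)
          linarith
        have hpmem : h12 n τ ∈ h12 n '' Icc (0:ℝ) (dist (γ₁ n) (γ₂ n)) := ⟨τ, hτ, rfl⟩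
        obtain ⟨q, hq, hdq⟩ := hthin (γ₁ n) (γ₂ n) x (h12 n)
          (fun σ => f2 n (dist x (γ₂ n) - σ)) (fun σ => f1 n (dist x (γ₁ n) - σ))
          (hh12 n) (seg_rev (hf2 n)) (seg_rev (hf1 n)) _ hpmem
        rcases hq with hq | hq
        · obtain ⟨σ, hσ, rfl⟩ := hq
          right
          rw [hP2def]
          refine ⟨dist x (γ₂ n) - σ, ⟨?_, ?_⟩, ?_⟩
          · rw [dist_comm (γ₂ n) x] at hσ; linarith [hσ.2]
          · linarith [hσ.1]
          · calc dist y (f2 n (dist x (γ₂ n) - σ))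
                ≤ dist y (h12 n τ) + dist (h12 n τ) (f2 n (dist x (γ₂ n) - σ)) :=
                  dist_triangle _ _ _
              _ ≤ C' := by rw [hC']; linarith
        · obtain ⟨σ, hσ, rfl⟩ := hq
          left
          rw [hP1def]
          refine ⟨dist x (γ₁ n) - σ, ⟨?_, ?_⟩, ?_⟩
          · rw [dist_comm (γ₁ n) x] at hσ; linarith [hσ.2]
          · linarith [hσ.1]
          · calc dist y (f1 n (dist x (γ₁ n) - σ))
                ≤ dist y (h12 n τ) + dist (h12 n τ) (f1 n (dist x (γ₁ n) - σ)) :=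
                  dist_triangle _ _ _
              _ ≤ C' := by rw [hC']; linarith
      have hevP2 : ∀ᶠ n in ↑u, P2 n := by
        filter_upwards [hnot1, hcastev K] with n h1 h2
        exact (claim4 n h2).resolve_left h1
      exact hA2 hevP2
  · -- PART 2 : geodesics from an ideal point
    intro c₀ hc₀ y
    obtain ⟨c, hcray, hc0, hca⟩ := ray_toward hδ hgeo hthin u hu y c₀ hc₀
    refine ⟨c, hcray, hca, 0, le_rfl, ?_⟩
    rw [hc0, dist_self]
    exact hC'0
end
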